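/- arXiv:0906.2943 — 4 statements merged into one kernel-verified Lean document; each statement's English description precedes it below -/
import Mathlib

section
/- Let D ⊆ ℂ and m : D → [0,∞). Then ‖·‖_m is a norm on R_m(H), and the normed space (R_m(H), ‖·‖_m) is complete, i.e. a Banach space. -/
open Complex Filter Topology

noncomputable section

/-- The set `R_m(H)`: elements of `H` such that both `F` and `F^#` are dominated by a
multiple of the majorant `m` on `D`.  Here `ev` realizes elements of `H` as entire
functions. -/
def RmSet {H : Type*} [NormedAddCommGroup H] [InnerProductSpace ℂ H]
    (ev : H →ₗ[ℂ] (ℂ → ℂ)) (D : Set ℂ) (m : ℂ → ℝ) : Set H :=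
  {F | ∃ C : ℝ, 0 ≤ C ∧ ∀ z ∈ D,
      ‖ev F z‖ ≤ C * m z ∧
      ‖(starRingEnd ℂ) (ev F ((starRingEnd ℂ) z))‖ ≤ C * m z}

/-- The norm `‖F‖_m = max(‖F‖_H, min{C ≥ 0 : |F(z)|,|F^#(z)| ≤ C m(z), z ∈ D})`. -/
def mnorm {H : Type*} [NormedAddCommGroup H] [InnerProductSpace ℂ H]
    (ev : H →ₗ[ℂ] (ℂ → ℂ)) (D : Set ℂ) (m : ℂ → ℝ) (F : H) : ℝ :=
  max ‖F‖ (sInf {C : ℝ | 0 ≤ C ∧ ∀ z ∈ D,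
      ‖ev F z‖ ≤ C * m z ∧
      ‖(starRingEnd ℂ) (ev F ((starRingEnd ℂ) z))‖ ≤ C * m z})

namespace RmAux

variable {H : Type*} [NormedAddCommGroup H] [InnerProductSpace ℂ H]
variable (ev : H →ₗ[ℂ] (ℂ → ℂ)) (D : Set ℂ) (m : ℂ → ℝ)

def S (F : H) : Set ℝ :=
  {C : ℝ | 0 ≤ C ∧ ∀ z ∈ D,
    ‖ev F z‖ ≤ C * m z ∧ ‖ev F ((starRingEnd ℂ) z)‖ ≤ C * m z}

lemma mem_RmSet_iff (F : H) : F ∈ RmSet ev D m ↔ (S ev D m F).Nonempty := by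
  simp only [RmSet, Set.mem_setOf_eq, Set.Nonempty, S, Complex.norm_conj]

lemma mnorm_eq (F : H) : mnorm ev D m F = max ‖F‖ (sInf (S ev D m F)) := by
  have h : {C : ℝ | 0 ≤ C ∧ ∀ z ∈ D,
      ‖ev F z‖ ≤ C * m z ∧
      ‖(starRingEnd ℂ) (ev F ((starRingEnd ℂ) z))‖ ≤ C * m z} = S ev D m F := by
    ext C; simp [S, Complex.norm_conj]
  rw [mnorm, h]

lemma bddBelow_S (F : H) : BddBelow (S ev D m F) := ⟨0, fun _ hC => hC.1⟩

lemma isClosed_S (F : H) : IsClosed (S ev D m F) := by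
  have h : S ev D m F = Set.Ici 0 ∩ ⋂ z ∈ D,
      ({C : ℝ | ‖ev F z‖ ≤ C * m z} ∩
       {C : ℝ | ‖ev F ((starRingEnd ℂ) z)‖ ≤ C * m z}) := by
    ext C
    simp only [S, Set.mem_setOf_eq, Set.mem_inter_iff, Set.mem_Ici, Set.mem_iInter]
  rw [h]
  refine isClosed_Ici.inter (isClosed_biInter fun z _ => IsClosed.inter ?_ ?_) <;>
    exact isClosed_le continuous_const (continuous_id.mul continuous_const)

lemma csInf_mem_S (F : H) (h : (S ev D m F).Nonempty) : sInf (S ev D m F) ∈ S ev D m F :=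
  (isClosed_S ev D m F).csInf_mem h (bddBelow_S ev D m F)

end RmAux

/-- `‖·‖_m` is a norm on `R_m(H)` and `(R_m(H), ‖·‖_m)` is complete. -/
theorem rmSet_mnorm_is_complete_norm
    {H : Type*} [NormedAddCommGroup H] [InnerProductSpace ℂ H] [CompleteSpace H]
    (ev : H →ₗ[ℂ] (ℂ → ℂ)) (hinj : Function.Injective ev)
    (hentire : ∀ F : H, Differentiable ℂ (ev F))
    (heval : ∀ w : ℂ, Continuous fun F : H => ev F w)
    (hsharp : ∀ F : H, ∃ G : H,
      (∀ z : ℂ, ev G z = (starRingEnd ℂ) (ev F ((starRingEnd ℂ) z))) ∧ ‖G‖ = ‖F‖)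
    (D : Set ℂ) (m : ℂ → ℝ) (hm : ∀ z ∈ D, 0 ≤ m z) :
    -- `R_m(H)` is closed under addition and `‖·‖_m` is subadditive
    (∀ F ∈ RmSet ev D m, ∀ G ∈ RmSet ev D m,
        F + G ∈ RmSet ev D m ∧
        mnorm ev D m (F + G) ≤ mnorm ev D m F + mnorm ev D m G) ∧
    -- `R_m(H)` is closed under scalar multiplication and `‖·‖_m` is homogeneous
    (∀ F ∈ RmSet ev D m, ∀ c : ℂ,
        c • F ∈ RmSet ev D m ∧
        mnorm ev D m (c • F) = ‖c‖ * mnorm ev D m F) ∧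
    -- `‖·‖_m` is nonnegative and definite
    (∀ F ∈ RmSet ev D m, 0 ≤ mnorm ev D m F ∧ (mnorm ev D m F = 0 ↔ F = 0)) ∧
    -- completeness: every `‖·‖_m`-Cauchy sequence in `R_m(H)` converges in `R_m(H)`
    (∀ u : ℕ → H, (∀ n, u n ∈ RmSet ev D m) →
        (∀ ε : ℝ, 0 < ε → ∃ N : ℕ, ∀ p ≥ N, ∀ q ≥ N, mnorm ev D m (u p - u q) < ε) →
        ∃ F ∈ RmSet ev D m, ∀ ε : ℝ, 0 < ε → ∃ N : ℕ, ∀ n ≥ N,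
          mnorm ev D m (u n - F) < ε) := by
  have hSne : ∀ F : H, F ∈ RmSet ev D m → (RmAux.S ev D m F).Nonempty :=
    fun F hF => (RmAux.mem_RmSet_iff ev D m F).1 hF
  have hb : ∀ F : H, BddBelow (RmAux.S ev D m F) := RmAux.bddBelow_S ev D m
  have hmem : ∀ F : H, (RmAux.S ev D m F).Nonempty →
      sInf (RmAux.S ev D m F) ∈ RmAux.S ev D m F := RmAux.csInf_mem_S ev D m
  -- additivity core
  have hadd : ∀ F G : H, ∀ a ∈ RmAux.S ev D m F, ∀ b ∈ RmAux.S ev D m G,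
      a + b ∈ RmAux.S ev D m (F + G) := by
    rintro F G a ⟨ha0, ha⟩ b ⟨hb0, hbb⟩
    refine ⟨add_nonneg ha0 hb0, fun z hz => ?_⟩
    have e1 : ev (F + G) z = ev F z + ev G z := by rw [map_add]; rfl
    have e2 : ev (F + G) ((starRingEnd ℂ) z)
        = ev F ((starRingEnd ℂ) z) + ev G ((starRingEnd ℂ) z) := by rw [map_add]; rfl
    constructor
    · rw [e1, add_mul]
      exact (norm_add_le _ _).trans (add_le_add (ha z hz).1 (hbb z hz).1)
    · rw [e2, add_mul]
      exact (norm_add_le _ _).trans (add_le_add (ha z hz).2 (hbb z hz).2)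
  -- scalar core
  have hsmul : ∀ (F : H) (c : ℂ), ∀ a ∈ RmAux.S ev D m F,
      ‖c‖ * a ∈ RmAux.S ev D m (c • F) := by
    rintro F c a ⟨ha0, ha⟩
    refine ⟨mul_nonneg (norm_nonneg c) ha0, fun z hz => ?_⟩
    have e1 : ev (c • F) z = c * ev F z := by rw [map_smul]; rfl
    have e2 : ev (c • F) ((starRingEnd ℂ) z) = c * ev F ((starRingEnd ℂ) z) := by
      rw [map_smul]; rfl
    constructor
    · rw [e1, norm_mul, mul_assoc]
      exact mul_le_mul_of_nonneg_left (ha z hz).1 (norm_nonneg c)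
    · rw [e2, norm_mul, mul_assoc]
      exact mul_le_mul_of_nonneg_left (ha z hz).2 (norm_nonneg c)
  -- zero
  have hS0 : (0 : ℝ) ∈ RmAux.S ev D m 0 := by
    refine ⟨le_refl 0, fun z hz => ?_⟩
    have e0 : ∀ w : ℂ, ev (0 : H) w = 0 := fun w => by rw [map_zero]; rfl
    simp [e0]
  have hsInf0 : sInf (RmAux.S ev D m (0 : H)) = 0 :=
    le_antisymm (csInf_le (hb 0) hS0) ((hmem 0 ⟨0, hS0⟩).1)
  have hmnorm0 : mnorm ev D m (0 : H) = 0 := by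
    rw [RmAux.mnorm_eq, norm_zero, hsInf0, max_self]
  refine ⟨?_, ?_, ?_, ?_⟩
  -- Part 1: additivity
  · intro F hF G hG
    have hFne := hSne F hF
    have hGne := hSne G hG
    have hmemFG := hadd F G _ (hmem F hFne) _ (hmem G hGne)
    refine ⟨(RmAux.mem_RmSet_iff ev D m _).2 ⟨_, hmemFG⟩, ?_⟩
    rw [RmAux.mnorm_eq, RmAux.mnorm_eq, RmAux.mnorm_eq]
    refine max_le ?_ ?_
    · exact (norm_add_le F G).trans (add_le_add (le_max_left _ _) (le_max_left _ _))
    · exact (csInf_le (hb _) hmemFG).trans (add_le_add (le_max_right _ _) (le_max_right _ _))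
  -- Part 2: scalar
  · intro F hF c
    have hFne := hSne F hF
    have hcF := hsmul F c _ (hmem F hFne)
    refine ⟨(RmAux.mem_RmSet_iff ev D m _).2 ⟨_, hcF⟩, ?_⟩
    rcases eq_or_ne c 0 with rfl | hc
    · simp [hmnorm0]
    · have h1 : sInf (RmAux.S ev D m (c • F)) ≤ ‖c‖ * sInf (RmAux.S ev D m F) :=
        csInf_le (hb _) hcF
      have h2 : ‖c‖ * sInf (RmAux.S ev D m F) ≤ sInf (RmAux.S ev D m (c • F)) := by
        have h3 := hsmul (c • F) c⁻¹ _ (hmem _ ⟨_, hcF⟩)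
        rw [smul_smul, inv_mul_cancel₀ hc, one_smul] at h3
        have h4 : sInf (RmAux.S ev D m F) ≤
            ‖c⁻¹‖ * sInf (RmAux.S ev D m (c • F)) := csInf_le (hb _) h3
        calc ‖c‖ * sInf (RmAux.S ev D m F)
            ≤ ‖c‖ * (‖c⁻¹‖ * sInf (RmAux.S ev D m (c • F))) :=
              mul_le_mul_of_nonneg_left h4 (norm_nonneg c)
          _ = sInf (RmAux.S ev D m (c • F)) := by
              rw [← mul_assoc, norm_inv, mul_inv_cancel₀ (by simpa using hc), one_mul]
      rw [RmAux.mnorm_eq, RmAux.mnorm_eq, norm_smul,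
          le_antisymm h1 h2, ← mul_max_of_nonneg _ _ (norm_nonneg c)]
  -- Part 3: definiteness
  · intro F hF
    have hFne := hSne F hF
    have hge : ‖F‖ ≤ mnorm ev D m F := by rw [RmAux.mnorm_eq]; exact le_max_left _ _
    refine ⟨le_trans (norm_nonneg F) hge, ⟨fun h => ?_, fun h => ?_⟩⟩
    · exact norm_le_zero_iff.1 (h ▸ hge)
    · rw [h]; exact hmnorm0
  -- Part 4: completeness
  · intro u humem hcau
    have hmle : ∀ p q : ℕ, ‖u p - u q‖ ≤ mnorm ev D m (u p - u q) := by
      intro p q; rw [RmAux.mnorm_eq]; exact le_max_left _ _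
    have hC : CauchySeq u := by
      rw [Metric.cauchySeq_iff]
      intro ε hε
      obtain ⟨N, hN⟩ := hcau ε hε
      exact ⟨N, fun p hp q hq => by
        rw [dist_eq_norm]; exact lt_of_le_of_lt (hmle p q) (hN p hp q hq)⟩
    obtain ⟨F, hF⟩ := cauchySeq_tendsto_of_complete hC
    have hptw : ∀ w : ℂ, Tendsto (fun n => ev (u n) w) atTop (𝓝 (ev F w)) :=
      fun w => ((heval w).tendsto F).comp hF
    have hsub : ∀ p q : ℕ, (RmAux.S ev D m (u p - u q)).Nonempty := by
      intro p q
      obtain ⟨a, ha⟩ := hSne _ (humem p)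
      obtain ⟨b, hbb⟩ := hSne _ (humem q)
      have h1 := hsmul (u q) (-1) b hbb
      rw [neg_one_smul] at h1
      have h2 := hadd (u p) (-(u q)) a ha _ h1
      rw [← sub_eq_add_neg] at h2
      exact ⟨_, h2⟩
    have hbound : ∀ (ε : ℝ) (N : ℕ), 0 ≤ ε →
        (∀ p ≥ N, ∀ q ≥ N, mnorm ev D m (u p - u q) < ε) →
        ∀ p ≥ N, ε ∈ RmAux.S ev D m (u p - F) := by
      intro ε N hε0 hN p hp
      refine ⟨hε0, fun z hz => ?_⟩
      have key : ∀ w : ℂ, (∀ q ≥ N, ‖ev (u p - u q) w‖ ≤ ε * m z) →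
          ‖ev (u p - F) w‖ ≤ ε * m z := by
        intro w hw
        have h1 : Tendsto (fun q => ev (u p) w - ev (u q) w) atTop
            (𝓝 (ev (u p) w - ev F w)) := tendsto_const_nhds.sub (hptw w)
        have h2 : ∀ q : ℕ, ev (u p - u q) w = ev (u p) w - ev (u q) w := by
          intro q; rw [map_sub]; rfl
        have h3 : ev (u p - F) w = ev (u p) w - ev F w := by rw [map_sub]; rfl
        have ht : Tendsto (fun q => ‖ev (u p - u q) w‖) atTop
            (𝓝 (‖ev (u p - F) w‖)) := by
          simp only [h2, h3]
          exact (continuous_norm.tendsto _).comp h1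
        exact le_of_tendsto ht (eventually_atTop.2 ⟨N, hw⟩)
      have hqb : ∀ q ≥ N,
          ‖ev (u p - u q) z‖ ≤ ε * m z ∧
          ‖ev (u p - u q) ((starRingEnd ℂ) z)‖ ≤ ε * m z := by
        intro q hq
        have h1 := hmem _ (hsub p q)
        have h2 : sInf (RmAux.S ev D m (u p - u q)) ≤ ε := by
          have h5 := hN p hp q hq
          rw [RmAux.mnorm_eq] at h5
          exact le_of_lt (lt_of_le_of_lt (le_max_right _ _) h5)
        have hmz := hm z hz
        exact ⟨(h1.2 z hz).1.trans (mul_le_mul_of_nonneg_right h2 hmz),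
               (h1.2 z hz).2.trans (mul_le_mul_of_nonneg_right h2 hmz)⟩
      exact ⟨key z (fun q hq => (hqb q hq).1), key _ (fun q hq => (hqb q hq).2)⟩
    have hFmem : F ∈ RmSet ev D m := by
      obtain ⟨N, hN⟩ := hcau 1 one_pos
      have h1 : (1 : ℝ) ∈ RmAux.S ev D m (u N - F) :=
        hbound 1 N zero_le_one hN N le_rfl
      obtain ⟨C, hC0, hCb⟩ := hSne _ (humem N)
      refine (RmAux.mem_RmSet_iff ev D m F).2
        ⟨C + 1, add_nonneg hC0 zero_le_one, fun z hz => ?_⟩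
      have e : ∀ w : ℂ, ev F w = ev (u N) w - ev (u N - F) w := by
        intro w
        have h3 : ev (u N - F) w = ev (u N) w - ev F w := by rw [map_sub]; rfl
        rw [h3]; ring
      have habs : ∀ a b : ℂ, ‖a - b‖ ≤ ‖a‖ + ‖b‖ := by
        intro a b
        simpa using norm_sub_le a b
      constructor
      · rw [e z, add_mul, one_mul]
        exact (habs _ _).trans (add_le_add (hCb z hz).1 (by simpa using (h1.2 z hz).1))
      · rw [e ((starRingEnd ℂ) z), add_mul, one_mul]
        exact (habs _ _).trans (add_le_add (hCb z hz).2 (by simpa using (h1.2 z hz).2))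
    refine ⟨F, hFmem, fun ε hε => ?_⟩
    obtain ⟨N, hN⟩ := hcau (ε / 2) (half_pos hε)
    refine ⟨N, fun n hn => ?_⟩
    have h1 : ε / 2 ∈ RmAux.S ev D m (u n - F) :=
      hbound (ε / 2) N (le_of_lt (half_pos hε)) hN n hn
    have h2 : sInf (RmAux.S ev D m (u n - F)) ≤ ε / 2 := csInf_le (hb _) h1
    have h3 : ‖u n - F‖ ≤ ε / 2 := by
      have ht : Tendsto (fun q => ‖u n - u q‖) atTop (𝓝 ‖u n - F‖) :=
        (continuous_norm.tendsto _).comp (tendsto_const_nhds.sub hF)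
      refine le_of_tendsto ht (eventually_atTop.2 ⟨N, fun q hq => ?_⟩)
      exact le_of_lt (lt_of_le_of_lt (hmle n q) (hN n hn q hq))
    rw [RmAux.mnorm_eq]
    exact lt_of_le_of_lt (max_le h3 h2) (half_lt_self hε)
end
end

section
/- Let D ⊆ {z ∈ ℂ : Im z ≥ 0} and m : D → [0,∞), and assume R_m(H) ≠ {0}. Then there exists F ∈ R_m(H), F ≠ 0, such that mt_H(F) = sup{ mt_H(G) : G ∈ R_m(H), G ≠ 0 } (the supremum of mean types over R_m(H) is attained). -/
open Complex Filter Topology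

noncomputable section

open scoped InnerProductSpace

/-- The mean type of `F` relative to `H = H(E)`:
`mt_H(F) = limsup_{y → ∞} log(|F(iy)|/|E(iy)|)/y`, an extended real number. -/
def meanType {H : Type*} [NormedAddCommGroup H] [InnerProductSpace ℂ H]
    (ev : H →ₗ[ℂ] (ℂ → ℂ)) (E : ℂ → ℂ) (F : H) : EReal :=
  Filter.limsup
    (fun y : ℝ =>
      ((Real.log (‖ev F ((y : ℂ) * Complex.I)‖ /
          ‖E ((y : ℂ) * Complex.I)‖) / y : ℝ) : EReal))
    Filter.atTop


section
variable {H : Type*} [NormedAddCommGroup H] [InnerProductSpace ℂ H]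
variable (ev : H →ₗ[ℂ] (ℂ → ℂ)) (E : ℂ → ℂ)

/-- the log-ratio function -/
def gfun (F : H) (y : ℝ) : ℝ :=
  Real.log (‖ev F ((y : ℂ) * Complex.I)‖ /
      ‖E ((y : ℂ) * Complex.I)‖) / y

lemma meanType_eq (F : H) :
    meanType ev E F = Filter.limsup (fun y : ℝ => ((gfun ev E F y : ℝ) : EReal)) atTop := rfl

variable (hHB : ∀ z : ℂ, 0 < z.im → ‖E ((starRingEnd ℂ) z)‖ < ‖E z‖)

include hHB in
lemma Epos {y : ℝ} (hy : 0 < y) : 0 < ‖E ((y : ℂ) * Complex.I)‖ := by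
  have h := hHB ((y : ℂ) * Complex.I) (by simp [hy])
  exact lt_of_le_of_lt (norm_nonneg _) h

variable (K : ℂ → H)
variable (hKform : ∀ w z : ℂ, z ≠ (starRingEnd ℂ) w →
      ev (K w) z = (E z * (starRingEnd ℂ) (E w) -
          (starRingEnd ℂ) (E ((starRingEnd ℂ) z)) * E ((starRingEnd ℂ) w)) /
        (2 * (Real.pi : ℂ) * Complex.I * ((starRingEnd ℂ) w - z)))
variable (hrepro : ∀ (F : H) (w : ℂ), ⟪K w, F⟫_ℂ = ev F w)

include hKform hrepro in
lemma normK_sq {y : ℝ} (hy : 0 < y) :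
    ‖K ((y : ℂ) * Complex.I)‖ ^ 2 =
      (‖E ((y : ℂ) * Complex.I)‖ ^ 2
        - ‖E (-((y : ℂ) * Complex.I))‖ ^ 2) / (4 * Real.pi * y) := by
  have hconj : (starRingEnd ℂ) ((y : ℂ) * Complex.I) = -((y : ℂ) * Complex.I) := by
    simp [Complex.ext_iff]
  have hne : ((y : ℂ) * Complex.I) ≠ (starRingEnd ℂ) ((y : ℂ) * Complex.I) := by
    rw [hconj]
    intro h
    have h2 : ((y : ℂ) * Complex.I).im = (-((y : ℂ) * Complex.I)).im := by rw [← h]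
    rw [Complex.neg_im] at h2
    have : ((y : ℂ) * Complex.I).im = y := by simp
    rw [this] at h2
    linarith
  have h1 : (⟪K ((y : ℂ) * Complex.I), K ((y : ℂ) * Complex.I)⟫_ℂ)
      = ev (K ((y : ℂ) * Complex.I)) ((y : ℂ) * Complex.I) := hrepro _ _
  rw [hKform _ _ hne] at h1
  have h2 : ⟪K ((y : ℂ) * Complex.I), K ((y : ℂ) * Complex.I)⟫_ℂ
      = ((‖K ((y : ℂ) * Complex.I)‖ ^ 2 : ℝ) : ℂ) := by
    rw [inner_self_eq_norm_sq_to_K]; norm_cast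
  rw [h2, hconj] at h1
  have hden : (2 * (Real.pi : ℂ) * Complex.I * (-((y : ℂ) * Complex.I) - (y : ℂ) * Complex.I))
      = ((4 * Real.pi * y : ℝ) : ℂ) := by
    push_cast
    ring_nf
    rw [Complex.I_sq]
    ring
  have hnum : E ((y:ℂ) * Complex.I) * (starRingEnd ℂ) (E ((y:ℂ) * Complex.I)) -
      (starRingEnd ℂ) (E (-((y : ℂ) * Complex.I))) * E (-((y:ℂ) * Complex.I))
      = ((‖E ((y : ℂ) * Complex.I)‖ ^ 2
        - ‖E (-((y : ℂ) * Complex.I))‖ ^ 2 : ℝ) : ℂ) := by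
    rw [Complex.mul_conj, ← Complex.normSq_eq_conj_mul_self,
      ← Complex.sq_norm (E ((y:ℂ) * Complex.I)), ← Complex.sq_norm (E (-((y:ℂ) * Complex.I)))]
    push_cast
    ring
  rw [hnum, hden, ← Complex.ofReal_div] at h1
  exact_mod_cast h1

end

section
variable {H : Type*} [NormedAddCommGroup H] [InnerProductSpace ℂ H]
variable (ev : H →ₗ[ℂ] (ℂ → ℂ)) (E : ℂ → ℂ)
variable (hHB : ∀ z : ℂ, 0 < z.im → ‖E ((starRingEnd ℂ) z)‖ < ‖E z‖)
variable (K : ℂ → H)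
variable (hKform : ∀ w z : ℂ, z ≠ (starRingEnd ℂ) w →
      ev (K w) z = (E z * (starRingEnd ℂ) (E w) -
          (starRingEnd ℂ) (E ((starRingEnd ℂ) z)) * E ((starRingEnd ℂ) w)) /
        (2 * (Real.pi : ℂ) * Complex.I * ((starRingEnd ℂ) w - z)))
variable (hrepro : ∀ (F : H) (w : ℂ), ⟪K w, F⟫_ℂ = ev F w)

include hKform hrepro in
lemma point_bound (F : H) {y : ℝ} (hy : 0 < y) :
    ‖ev F ((y:ℂ) * Complex.I)‖ ≤
      ‖F‖ * (‖E ((y:ℂ) * Complex.I)‖ / Real.sqrt (4 * Real.pi * y)) := by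
  set w := (y:ℂ) * Complex.I
  have h1 : ‖ev F w‖ ≤ ‖K w‖ * ‖F‖ := by
    rw [← hrepro F w]
    exact norm_inner_le_norm _ _
  have hc : (0:ℝ) < 4 * Real.pi * y := by positivity
  have h4 : ‖K w‖^2 ≤ (‖E w‖)^2 / (4 * Real.pi * y) := by
    rw [normK_sq ev E K hKform hrepro hy]
    gcongr
    exact sub_le_self _ (sq_nonneg _)
  have h5 : ‖K w‖ ≤ ‖E w‖ / Real.sqrt (4 * Real.pi * y) := by
    have e1 : (‖E w‖)^2 / (4 * Real.pi * y)
        = (‖E w‖ / Real.sqrt (4 * Real.pi * y))^2 := by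
      rw [div_pow, Real.sq_sqrt hc.le]
    rw [e1] at h4
    have := Real.sqrt_le_sqrt h4
    rwa [Real.sqrt_sq (norm_nonneg _), Real.sqrt_sq (by positivity)] at this
  calc ‖ev F w‖ ≤ ‖K w‖ * ‖F‖ := h1
    _ ≤ (‖E w‖ / Real.sqrt (4 * Real.pi * y)) * ‖F‖ := by
        gcongr
    _ = ‖F‖ * (‖E w‖ / Real.sqrt (4 * Real.pi * y)) := by ring

include hKform hrepro hHB in
lemma mt_le_zero (F : H) : meanType ev E F ≤ 0 := by
  rw [meanType_eq]
  apply Filter.limsup_le_of_le (by isBoundedDefault)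
  filter_upwards [Filter.eventually_ge_atTop (max 1 (‖F‖^2))] with y hy
  have hy1 : (1:ℝ) ≤ y := le_trans (le_max_left _ _) hy
  have hyF : ‖F‖^2 ≤ y := le_trans (le_max_right _ _) hy
  have hy0 : (0:ℝ) < y := lt_of_lt_of_le one_pos hy1
  have hEpos := Epos E hHB hy0
  have hq : ‖ev F ((y:ℂ) * Complex.I)‖ /
      ‖E ((y:ℂ) * Complex.I)‖ ≤ 1 := by
    rw [div_le_one hEpos]
    have hp := point_bound ev E K hKform hrepro F hy0
    have hs : ‖F‖ ≤ Real.sqrt (4 * Real.pi * y) := by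
      have s1 : ‖F‖ ≤ Real.sqrt y := by
        have := Real.sqrt_le_sqrt hyF
        rwa [Real.sqrt_sq (norm_nonneg _)] at this
      refine le_trans s1 (Real.sqrt_le_sqrt ?_)
      nlinarith [Real.pi_gt_three]
    calc ‖ev F ((y:ℂ) * Complex.I)‖
        ≤ ‖F‖ * (‖E ((y:ℂ) * Complex.I)‖ / Real.sqrt (4 * Real.pi * y)) := hp
      _ ≤ Real.sqrt (4 * Real.pi * y) *
          (‖E ((y:ℂ) * Complex.I)‖ / Real.sqrt (4 * Real.pi * y)) := by
          gcongr
      _ = ‖E ((y:ℂ) * Complex.I)‖ := by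
          field_simp
  have hlog : Real.log (‖ev F ((y:ℂ) * Complex.I)‖ /
      ‖E ((y:ℂ) * Complex.I)‖) ≤ 0 :=
    Real.log_nonpos (div_nonneg (norm_nonneg _) (norm_nonneg _)) hq
  have hg : gfun ev E F y ≤ 0 := by
    unfold gfun
    exact div_nonpos_iff.mpr (Or.inr ⟨hlog, hy0.le⟩)
  exact_mod_cast EReal.coe_nonpos.mpr hg
end

/-- Per-index invariant for the recursive construction. `h i = (cᵢ, yᵢ, dᵢ)`. -/
def GoodA (φ : ℕ → ℂ → ℂ) (eA : ℝ → ℝ) (r β : ℕ → ℝ) (i : ℕ) (h : ℕ → ℝ × ℝ × ℝ) : Prop :=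
  0 < (h i).1 ∧ (h i).1 * β i ≤ (1/2)^i ∧ ((i+1:ℝ) ≤ (h i).2.1) ∧
  (-(1/(i+1:ℝ)) ≤ Real.log ((h i).1 / 8) / (h i).2.1) ∧
  ((h i).2.2 = (h i).1 / 8 * ‖φ i (((h i).2.1 : ℂ) * Complex.I)‖) ∧
  (Real.exp (r i * (h i).2.1) * eA ((h i).2.1) <
      ‖φ i (((h i).2.1 : ℂ) * Complex.I)‖) ∧
  (2 * (h i).2.2 ≤ ‖∑ i' ∈ Finset.range (i+1),
      (((h i').1 : ℝ) : ℂ) * φ i' (((h i).2.1 : ℂ) * Complex.I)‖) ∧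
  (∀ i' < i, (h i).1 * ‖φ i (((h i').2.1 : ℂ) * Complex.I)‖ ≤
      (1/2)^i * (h i').2.2)

lemma GoodA_congr (φ : ℕ → ℂ → ℂ) (eA : ℝ → ℝ) (r β : ℕ → ℝ) (i : ℕ)
    (h h' : ℕ → ℝ × ℝ × ℝ) (he : ∀ i' ≤ i, h i' = h' i')
    (hA : GoodA φ eA r β i h) : GoodA φ eA r β i h' := by
  have hi : h' i = h i := (he i le_rfl).symm
  obtain ⟨a1, a2, a3, a4, a5, a6, a7, a8⟩ := hA
  unfold GoodA
  rw [hi]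
  refine ⟨a1, a2, a3, a4, a5, a6, ?_, ?_⟩
  · have e : (∑ i' ∈ Finset.range (i+1), (((h' i').1 : ℝ) : ℂ) * φ i' (((h i).2.1 : ℂ) * Complex.I))
        = ∑ i' ∈ Finset.range (i+1), (((h i').1 : ℝ) : ℂ) * φ i' (((h i).2.1 : ℂ) * Complex.I) := by
      refine Finset.sum_congr rfl (fun i' hi' => ?_)
      rw [he i' (Nat.lt_succ_iff.mp (Finset.mem_range.mp hi'))]
    rw [e]
    exact a7
  · intro i' hii
    rw [← he i' (le_of_lt hii)]
    exact a8 i' hii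

lemma GoodA_step (φ : ℕ → ℂ → ℂ) (eA : ℝ → ℝ) (r β : ℕ → ℝ)
    (hβ : ∀ i, 0 ≤ β i) (heA : ∀ y : ℝ, 1 ≤ y → 0 < eA y)
    (hext : ∀ (i : ℕ) (b : ℝ), ∃ y : ℝ, b ≤ y ∧ 1 ≤ y ∧
      Real.exp (r i * y) * eA y < ‖φ i ((y : ℂ) * Complex.I)‖)
    (j : ℕ) (h : ℕ → ℝ × ℝ × ℝ) (hh : ∀ i < j, GoodA φ eA r β i h) :
    ∃ x, ∀ i < j + 1, GoodA φ eA r β i (Function.update h j x) := by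
  classical
  have dpos : ∀ i < j, 0 < (h i).2.2 := by
    intro i hi
    obtain ⟨a1, a2, a3, a4, a5, a6, a7, a8⟩ := hh i hi
    have hy1 : (1:ℝ) ≤ (h i).2.1 := by
      have : (1:ℝ) ≤ (i+1:ℝ) := by exact_mod_cast Nat.one_le_iff_ne_zero.mpr (Nat.succ_ne_zero i)
      linarith
    have heAp := heA _ hy1
    have hphi : 0 < ‖φ i (((h i).2.1 : ℂ) * Complex.I)‖ := by
      have : (0:ℝ) < Real.exp (r i * (h i).2.1) * eA ((h i).2.1) := by positivity
      linarith
    rw [a5]; positivity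
  -- the small constant t
  set base : ℝ := min 1 ((1/2)^j / (1 + β j)) with hbase_def
  set u : ℕ → ℝ := fun i => ((1/2)^j * (h i).2.2) /
      (1 + ‖φ j (((h i).2.1 : ℂ) * Complex.I)‖) with hu_def
  set s : Finset ℝ := insert base ((Finset.range j).image u) with hs_def
  have hsne : s.Nonempty := ⟨base, Finset.mem_insert_self _ _⟩
  set t : ℝ := s.min' hsne with ht_def
  have hbasepos : 0 < base := by
    have h1 : (0:ℝ) < 1 + β j := by have := hβ j; linarith
    have : (0:ℝ) < (1/2)^j / (1 + β j) := by positivity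
    exact lt_min one_pos this
  have hupos : ∀ i < j, 0 < u i := by
    intro i hi
    have h1 : (0:ℝ) < 1 + ‖φ j (((h i).2.1 : ℂ) * Complex.I)‖ := by positivity
    have := dpos i hi
    rw [hu_def]
    positivity
  have htpos : 0 < t := by
    have hmem : t ∈ s := Finset.min'_mem s hsne
    rw [hs_def] at hmem
    rcases Finset.mem_insert.mp hmem with he | he
    · rw [he]; exact hbasepos
    · obtain ⟨i, hi, he⟩ := Finset.mem_image.mp he
      rw [← he]
      exact hupos i (Finset.mem_range.mp hi)
  have ht_base : t ≤ base := Finset.min'_le _ _ (Finset.mem_insert_self _ _)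
  have ht_u : ∀ i < j, t ≤ u i := fun i hi =>
    Finset.min'_le _ _ (Finset.mem_insert_of_mem
      (Finset.mem_image_of_mem u (Finset.mem_range.mpr hi)))
  have ht1 : t ≤ 1 := le_trans ht_base (min_le_left _ _)
  -- the height y
  obtain ⟨y, hyb, hy1, hybig⟩ := hext j
    (max ((j:ℝ)+1) (((j:ℝ)+1) * (1 + |Real.log (t/16)|)))
  have hyj : ((j:ℝ)+1) ≤ y := le_trans (le_max_left _ _) hyb
  have hyL : ((j:ℝ)+1) * (1 + |Real.log (t/16)|) ≤ y := le_trans (le_max_right _ _) hyb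
  have hy0 : (0:ℝ) < y := lt_of_lt_of_le one_pos hy1
  have heAy := heA y hy1
  have hbbpos : 0 < ‖φ j ((y : ℂ) * Complex.I)‖ := by
    have : (0:ℝ) < Real.exp (r j * y) * eA y := by positivity
    linarith
  -- anti-cancellation
  have hanti : ∃ cc : ℝ, (cc = t ∨ cc = t / 2) ∧
      t / 4 * ‖φ j ((y : ℂ) * Complex.I)‖ ≤
        ‖(∑ i' ∈ Finset.range j, (((h i').1 : ℝ) : ℂ) * φ i' ((y : ℂ) * Complex.I))
          + ((cc : ℝ) : ℂ) * φ j ((y : ℂ) * Complex.I)‖ := by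
    by_contra hcon
    push_neg at hcon
    set a := ∑ i' ∈ Finset.range j, (((h i').1 : ℝ) : ℂ) * φ i' ((y : ℂ) * Complex.I)
    set bb := φ j ((y : ℂ) * Complex.I)
    have h1 := hcon t (Or.inl rfl)
    have h2 := hcon (t/2) (Or.inr rfl)
    have e1 : ((t : ℂ) - ((t/2 : ℝ) : ℂ)) * bb = (a + ((t:ℝ):ℂ) * bb) - (a + ((t/2 : ℝ):ℂ) * bb) := by
      push_cast
      ring
    have e2 : ‖((t : ℂ) - ((t/2 : ℝ) : ℂ)) * bb‖ = t/2 * ‖bb‖ := by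
      rw [norm_mul]
      congr 1
      have : ((t : ℂ) - ((t/2 : ℝ) : ℂ)) = (((t/2 : ℝ) : ℝ) : ℂ) := by push_cast; ring
      rw [this, Complex.norm_real, Real.norm_eq_abs, abs_of_pos (by linarith)]
    have h4 := norm_add_le (a + ((t:ℝ):ℂ) * bb) (-(a + ((t/2 : ℝ):ℂ) * bb))
    rw [← sub_eq_add_neg, norm_neg, ← e1, e2] at h4
    nlinarith [hbbpos]
  obtain ⟨cc, hccor, hccl⟩ := hanti
  have hccpos : 0 < cc := by rcases hccor with rfl | rfl <;> linarith
  have hcct : cc ≤ t := by rcases hccor with rfl | rfl <;> linarith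
  have hcct2 : t/2 ≤ cc := by rcases hccor with rfl | rfl <;> linarith
  refine ⟨(cc, y, cc / 8 * ‖φ j ((y : ℂ) * Complex.I)‖), ?_⟩
  intro i hi
  rcases Nat.lt_succ_iff_lt_or_eq.mp hi with hij | heq
  · refine GoodA_congr φ eA r β i h _ (fun i' hi' => ?_) (hh i hij)
    exact (Function.update_of_ne (by omega) _ _).symm
  · rw [heq]
    -- the new index
    have hupdj : (Function.update h j (cc, y, cc / 8 * ‖φ j ((y : ℂ) * Complex.I)‖)) j
        = (cc, y, cc / 8 * ‖φ j ((y : ℂ) * Complex.I)‖) := Function.update_self _ _ _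
    unfold GoodA
    rw [hupdj]
    have hJ : (0:ℝ) < (j:ℝ) + 1 := by positivity
    refine ⟨hccpos, ?_, hyj, ?_, rfl, hybig, ?_, ?_⟩
    · -- cc * β j ≤ (1/2)^j
      have h1pb : (0:ℝ) < 1 + β j := by have := hβ j; linarith
      have hq : (1/2:ℝ)^j / (1 + β j) * (1 + β j) = (1/2)^j :=
        div_mul_cancel₀ _ h1pb.ne'
      have hcb : cc ≤ (1/2)^j / (1 + β j) :=
        le_trans hcct (le_trans ht_base (min_le_right _ _))
      nlinarith [hβ j, hccpos, pow_pos (show (0:ℝ) < 1/2 by norm_num) j]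
    · -- log bound
      have htt : (0:ℝ) < t/16 := by linarith
      have hL : Real.log (t/16) ≤ Real.log (cc/8) :=
        Real.log_le_log htt (by linarith)
      have hLneg : Real.log (t/16) < 0 := Real.log_neg htt (by linarith)
      have habsL : |Real.log (t/16)| = -Real.log (t/16) := abs_of_neg hLneg
      have hXL : -Real.log (cc/8) ≤ 1 + |Real.log (t/16)| := by
        rw [habsL]; linarith
      have h1 : (-Real.log (cc/8)) * ((j:ℝ)+1) ≤ (1 + |Real.log (t/16)|) * ((j:ℝ)+1) :=
        mul_le_mul_of_nonneg_right hXL hJ.le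
      have h2 : (1 + |Real.log (t/16)|) * ((j:ℝ)+1) ≤ y := by
        rw [mul_comm]; exact hyL
      have h3 : (-Real.log (cc/8)) * ((j:ℝ)+1) ≤ y := le_trans h1 h2
      rw [neg_le, ← neg_div]
      rw [div_le_div_iff₀ hy0 hJ]
      linarith
    · -- main lower bound on partial sum
      rw [Finset.sum_range_succ]
      have e : (∑ i' ∈ Finset.range j,
          (((Function.update h j (cc, y, cc / 8 * ‖φ j ((y : ℂ) * Complex.I)‖) i').1 : ℝ) : ℂ)
            * φ i' ((y : ℂ) * Complex.I))
          = ∑ i' ∈ Finset.range j, (((h i').1 : ℝ) : ℂ) * φ i' ((y : ℂ) * Complex.I) := by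
        refine Finset.sum_congr rfl (fun i' hi' => ?_)
        rw [Function.update_of_ne (by have := Finset.mem_range.mp hi'; omega) _ _]
      rw [e, hupdj]
      have : cc / 4 * ‖φ j ((y : ℂ) * Complex.I)‖ ≤
          t / 4 * ‖φ j ((y : ℂ) * Complex.I)‖ := by
        apply mul_le_mul_of_nonneg_right (by linarith) (norm_nonneg _)
      calc 2 * (cc / 8 * ‖φ j ((y : ℂ) * Complex.I)‖)
          = cc / 4 * ‖φ j ((y : ℂ) * Complex.I)‖ := by ring
        _ ≤ t / 4 * ‖φ j ((y : ℂ) * Complex.I)‖ := this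
        _ ≤ _ := hccl
    · -- tail constraints
      intro i' hii
      rw [Function.update_of_ne (by omega) _ _]
      have hu := ht_u i' hii
      have hden : (0:ℝ) < 1 + ‖φ j (((h i').2.1 : ℂ) * Complex.I)‖ := by positivity
      have hdpos := dpos i' hii
      have hunn : 0 ≤ u i' := (hupos i' hii).le
      have hcancel : u i' * (1 + ‖φ j (((h i').2.1 : ℂ) * Complex.I)‖)
          = (1/2)^j * (h i').2.2 := by
        rw [hu_def]
        exact div_mul_cancel₀ _ hden.ne'
      calc cc * ‖φ j (((h i').2.1 : ℂ) * Complex.I)‖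
          ≤ u i' * ‖φ j (((h i').2.1 : ℂ) * Complex.I)‖ :=
            mul_le_mul_of_nonneg_right (le_trans hcct hu) (norm_nonneg _)
        _ ≤ u i' * (1 + ‖φ j (((h i').2.1 : ℂ) * Complex.I)‖) :=
            mul_le_mul_of_nonneg_left (by linarith) hunn
        _ = (1/2)^j * (h i').2.2 := hcancel

/-- The recursively chosen history. -/
def goodSeqAux (φ : ℕ → ℂ → ℂ) (eA : ℝ → ℝ) (r β : ℕ → ℝ)
    (hβ : ∀ i, 0 ≤ β i) (heA : ∀ y : ℝ, 1 ≤ y → 0 < eA y)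
    (hext : ∀ (i : ℕ) (b : ℝ), ∃ y : ℝ, b ≤ y ∧ 1 ≤ y ∧
      Real.exp (r i * y) * eA y < ‖φ i ((y : ℂ) * Complex.I)‖) :
    (j : ℕ) → {h : ℕ → ℝ × ℝ × ℝ // ∀ i < j, GoodA φ eA r β i h}
  | 0 => ⟨fun _ => (1, 1, 1), fun i hi => absurd hi (Nat.not_lt_zero i)⟩
  | (j+1) =>
    let p := goodSeqAux φ eA r β hβ heA hext j
    ⟨Function.update p.1 j (Classical.choose (GoodA_step φ eA r β hβ heA hext j p.1 p.2)),
     Classical.choose_spec (GoodA_step φ eA r β hβ heA hext j p.1 p.2)⟩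

lemma exists_good_seq (φ : ℕ → ℂ → ℂ) (eA : ℝ → ℝ) (r β : ℕ → ℝ)
    (hβ : ∀ i, 0 ≤ β i) (heA : ∀ y : ℝ, 1 ≤ y → 0 < eA y)
    (hext : ∀ (i : ℕ) (b : ℝ), ∃ y : ℝ, b ≤ y ∧ 1 ≤ y ∧
      Real.exp (r i * y) * eA y < ‖φ i ((y : ℂ) * Complex.I)‖) :
    ∃ hh : ℕ → ℝ × ℝ × ℝ, ∀ i, GoodA φ eA r β i hh := by
  classical
  set seq := goodSeqAux φ eA r β hβ heA hext with hseq
  have hagree : ∀ j i, i < j → (seq j).1 i = (seq (i+1)).1 i := by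
    intro j
    induction j with
    | zero => intro i hi; omega
    | succ j ih =>
      intro i hi
      rcases Nat.lt_succ_iff_lt_or_eq.mp hi with hij | rfl
      · have e : (seq (j+1)).1 i = (seq j).1 i := by
          rw [hseq]
          show (goodSeqAux φ eA r β hβ heA hext (j+1)).1 i = _
          simp only [goodSeqAux]
          exact Function.update_of_ne (by omega) _ _
        rw [e]
        exact ih i hij
      · rfl
  refine ⟨fun n => (seq (n+1)).1 n, fun i => ?_⟩
  refine GoodA_congr φ eA r β i ((seq (i+1)).1) _ (fun i' hi' => ?_)
    ((seq (i+1)).2 i (Nat.lt_succ_self i))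
  exact hagree (i+1) i' (by omega)

/-- In a de Branges space `H(E)`, the supremum of mean types over
`R_m(H) \ {0}` is attained. -/
theorem meanType_sup_attained_on_RmSet
    {H : Type*} [NormedAddCommGroup H] [InnerProductSpace ℂ H] [CompleteSpace H]
    (ev : H →ₗ[ℂ] (ℂ → ℂ)) (hinj : Function.Injective ev)
    (hentire : ∀ F : H, Differentiable ℂ (ev F))
    (E : ℂ → ℂ) (hE : Differentiable ℂ E)
    (hHB : ∀ z : ℂ, 0 < z.im → ‖E ((starRingEnd ℂ) z)‖ < ‖E z‖)
    (K : ℂ → H)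
    (hKform : ∀ w z : ℂ, z ≠ (starRingEnd ℂ) w →
      ev (K w) z = (E z * (starRingEnd ℂ) (E w) -
          (starRingEnd ℂ) (E ((starRingEnd ℂ) z)) * E ((starRingEnd ℂ) w)) /
        (2 * (Real.pi : ℂ) * Complex.I * ((starRingEnd ℂ) w - z)))
    (hrepro : ∀ (F : H) (w : ℂ), ⟪K w, F⟫_ℂ = ev F w)
    (D : Set ℂ) (hD : D ⊆ {z : ℂ | 0 ≤ z.im})
    (m : ℂ → ℝ) (hm : ∀ z ∈ D, 0 ≤ m z)
    (hne : ∃ F ∈ RmSet ev D m, F ≠ 0) :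
    ∃ F ∈ RmSet ev D m, F ≠ 0 ∧
      meanType ev E F =
        sSup (meanType ev E '' {G : H | G ∈ RmSet ev D m ∧ G ≠ 0}) := by
  classical
  by_contra hcon
  push_neg at hcon
  obtain ⟨F₀, hF₀m, hF₀0⟩ := hne
  set S : Set EReal := meanType ev E '' {G : H | G ∈ RmSet ev D m ∧ G ≠ 0} with hS_def
  set s : EReal := sSup S with hs_def
  have hmemS : ∀ G : H, G ∈ RmSet ev D m → G ≠ 0 → meanType ev E G ∈ S :=
    fun G h1 h2 => ⟨G, ⟨h1, h2⟩, rfl⟩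
  have hupper : ∀ x ∈ S, x ≤ (0 : EReal) := by
    rintro x ⟨G, _, rfl⟩
    exact mt_le_zero ev E hHB K hKform hrepro G
  have hs_le : s ≤ 0 := sSup_le hupper
  have hs_bot : s ≠ ⊥ := by
    intro hbot
    have h1 : meanType ev E F₀ ≤ s := le_sSup (hmemS F₀ hF₀m hF₀0)
    rw [hbot, le_bot_iff] at h1
    exact hcon F₀ hF₀m hF₀0 (by rw [h1, hbot])
  have hs_top : s ≠ ⊤ := ne_top_of_le_ne_top (by simp) hs_le
  set σ : ℝ := s.toReal with hσ_def
  have hσ : s = (σ : EReal) := (EReal.coe_toReal hs_top hs_bot).symm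
  -- no element has mean type 0
  have hnot0 : ∀ G : H, G ∈ RmSet ev D m → G ≠ 0 → meanType ev E G ≠ 0 := by
    intro G h1 h2 h0
    refine hcon G h1 h2 ?_
    have ha : meanType ev E G ≤ s := le_sSup (hmemS G h1 h2)
    have hb : s ≤ meanType ev E G := by rw [h0]; exact hs_le
    exact le_antisymm ha hb
  -- extraction lemma
  have hext0 : ∀ G : H, G ∈ RmSet ev D m → G ≠ 0 → ∀ r : ℝ,
      (r : EReal) < meanType ev E G → ∀ b : ℝ, ∃ y : ℝ, b ≤ y ∧ 1 ≤ y ∧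
        Real.exp (r * y) * ‖E ((y : ℂ) * Complex.I)‖ <
          ‖ev G ((y : ℂ) * Complex.I)‖ := by
    intro G h1 h2 r hr b
    by_contra hno
    push_neg at hno
    by_cases hz : ∃ᶠ y : ℝ in atTop, ‖ev G ((y : ℂ) * Complex.I)‖ = 0
    · -- frequently zero ⟹ mean type 0
      have hfreq : ∃ᶠ y : ℝ in atTop, (0 : EReal) ≤ ((gfun ev E G y : ℝ) : EReal) := by
        refine hz.mono (fun y hy => ?_)
        have : gfun ev E G y = 0 := by
          unfold gfun
          rw [hy]
          simp
        rw [this]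
        exact_mod_cast le_rfl
      have hge : (0 : EReal) ≤ meanType ev E G := by
        rw [meanType_eq]
        exact Filter.le_limsup_of_frequently_le hfreq
      exact hnot0 G h1 h2 (le_antisymm (mt_le_zero ev E hHB K hKform hrepro G) hge)
    · -- eventually nonzero ⟹ eventual bound gives limsup ≤ r
      rw [Filter.not_frequently] at hz
      have hev : ∀ᶠ y in (atTop : Filter ℝ), ((gfun ev E G y : ℝ) : EReal) ≤ (r : EReal) := by
        filter_upwards [hz, Filter.eventually_ge_atTop (max b 1)] with y hy0 hy1
        have hyb : b ≤ y := le_trans (le_max_left _ _) hy1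
        have hy1' : (1:ℝ) ≤ y := le_trans (le_max_right _ _) hy1
        have hypos : (0:ℝ) < y := lt_of_lt_of_le one_pos hy1'
        have hEp := Epos E hHB hypos
        have hGpos : 0 < ‖ev G ((y : ℂ) * Complex.I)‖ :=
          lt_of_le_of_ne (norm_nonneg _) (Ne.symm hy0)
        have hle := hno y hyb hy1'
        have hq : ‖ev G ((y : ℂ) * Complex.I)‖ /
            ‖E ((y : ℂ) * Complex.I)‖ ≤ Real.exp (r * y) := by
          rw [div_le_iff₀ hEp]
          exact hle
        have hlq : Real.log (‖ev G ((y : ℂ) * Complex.I)‖ /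
            ‖E ((y : ℂ) * Complex.I)‖) ≤ r * y := by
          have hqpos : 0 < ‖ev G ((y : ℂ) * Complex.I)‖ /
              ‖E ((y : ℂ) * Complex.I)‖ := div_pos hGpos hEp
          calc Real.log _ ≤ Real.log (Real.exp (r * y)) := Real.log_le_log hqpos hq
            _ = r * y := Real.log_exp _
        have : gfun ev E G y ≤ r := by
          unfold gfun
          rw [div_le_iff₀ hypos]
          exact hlq
        exact_mod_cast EReal.coe_le_coe_iff.mpr this
      have : meanType ev E G ≤ (r : EReal) := by
        rw [meanType_eq]
        exact Filter.limsup_le_of_le (by isBoundedDefault) hev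
      exact absurd (lt_of_lt_of_le hr this) (lt_irrefl _)
  -- choose approximating sequence
  have hGex : ∀ j : ℕ, ∃ G : H, G ∈ RmSet ev D m ∧ G ≠ 0 ∧
      ((σ - 1/(j+1) : ℝ) : EReal) < meanType ev E G := by
    intro j
    have hlt : ((σ - 1/(j+1) : ℝ) : EReal) < s := by
      rw [hσ]
      have : σ - 1/(j+1) < σ := by
        have : (0:ℝ) < 1/(j+1) := by positivity
        linarith
      exact_mod_cast this
    obtain ⟨x, hxS, hx⟩ := lt_sSup_iff.mp hlt
    obtain ⟨G, ⟨hG1, hG2⟩, rfl⟩ := hxS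
    exact ⟨G, hG1, hG2, hx⟩
  choose G hGm hG0 hGmt using hGex
  choose C hC0 hCb using fun j => hGm j
  -- apply the recursive construction
  set φ : ℕ → ℂ → ℂ := fun j z => ev (G j) z with hφ_def
  set eA : ℝ → ℝ := fun y => ‖E ((y : ℂ) * Complex.I)‖ with heA_def
  set rr : ℕ → ℝ := fun j => σ - 1/(j+1) with hrr_def
  set β : ℕ → ℝ := fun j => ‖G j‖ + C j with hβ_def
  have hβ0 : ∀ i, 0 ≤ β i := fun i => add_nonneg (norm_nonneg _) (hC0 i)
  have heA0 : ∀ y : ℝ, 1 ≤ y → 0 < eA y := fun y hy =>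
    Epos E hHB (lt_of_lt_of_le one_pos hy)
  have hext : ∀ (i : ℕ) (b : ℝ), ∃ y : ℝ, b ≤ y ∧ 1 ≤ y ∧
      Real.exp (rr i * y) * eA y < ‖φ i ((y : ℂ) * Complex.I)‖ := by
    intro i b
    exact hext0 (G i) (hGm i) (hG0 i) (rr i) (hGmt i) b
  obtain ⟨hh, hgood⟩ := exists_good_seq φ eA rr β hβ0 heA0 hext
  set c : ℕ → ℝ := fun i => (hh i).1 with hc_def
  set yy : ℕ → ℝ := fun i => (hh i).2.1 with hyy_def
  set d : ℕ → ℝ := fun i => (hh i).2.2 with hd_def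
  have hc_pos : ∀ i, 0 < c i := fun i => (hgood i).1
  have hcβ : ∀ i, c i * β i ≤ (1/2)^i := fun i => (hgood i).2.1
  have hcnorm : ∀ i, c i * ‖G i‖ ≤ (1/2)^i := by
    intro i
    have := hcβ i
    rw [hβ_def] at this
    nlinarith [hc_pos i, hC0 i, norm_nonneg (G i)]
  have hcC : ∀ i, c i * C i ≤ (1/2)^i := by
    intro i
    have := hcβ i
    rw [hβ_def] at this
    nlinarith [hc_pos i, hC0 i, norm_nonneg (G i)]
  have hy_ge : ∀ i : ℕ, ((i:ℝ)+1) ≤ yy i := fun i => (hgood i).2.2.1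
  have hy_pos : ∀ i : ℕ, (0:ℝ) < yy i := fun i => lt_of_lt_of_le (by positivity) (hy_ge i)
  have hy_one : ∀ i : ℕ, (1:ℝ) ≤ yy i := by
    intro i
    have := hy_ge i
    have h1 : (1:ℝ) ≤ (i:ℝ)+1 := by
      have : (0:ℝ) ≤ (i:ℝ) := Nat.cast_nonneg i
      linarith
    linarith
  have hlogb : ∀ i : ℕ, -(1/((i:ℝ)+1)) ≤ Real.log (c i / 8) / yy i := fun i => (hgood i).2.2.2.1
  have hd_eq : ∀ i, d i = c i / 8 * ‖φ i ((yy i : ℂ) * Complex.I)‖ :=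
    fun i => (hgood i).2.2.2.2.1
  have hbig : ∀ i, Real.exp (rr i * yy i) * eA (yy i) <
      ‖φ i ((yy i : ℂ) * Complex.I)‖ := fun i => (hgood i).2.2.2.2.2.1
  have hmain : ∀ i, 2 * d i ≤ ‖∑ i' ∈ Finset.range (i+1),
      ((c i' : ℝ) : ℂ) * φ i' ((yy i : ℂ) * Complex.I)‖ := fun i => (hgood i).2.2.2.2.2.2.1
  have htail : ∀ i, ∀ i' < i, c i * ‖φ i ((yy i' : ℂ) * Complex.I)‖ ≤
      (1/2)^i * d i' := fun i => (hgood i).2.2.2.2.2.2.2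
  have hd_pos : ∀ i, 0 < d i := by
    intro i
    rw [hd_eq i]
    have h1 := heA0 (yy i) (hy_one i)
    have h2 : (0:ℝ) < Real.exp (rr i * yy i) * eA (yy i) := by positivity
    have h3 := lt_trans h2 (hbig i)
    have := hc_pos i
    positivity
  -- the extremal function
  have hgeo : Summable (fun i : ℕ => ((1:ℝ)/2)^i) :=
    summable_geometric_of_lt_one (by norm_num) (by norm_num)
  have hsumH : Summable (fun i : ℕ => ((c i : ℝ) : ℂ) • G i) := by
    apply Summable.of_norm
    apply Summable.of_nonneg_of_le (fun i => norm_nonneg _) _ hgeo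
    intro i
    rw [norm_smul]
    have : ‖((c i : ℝ) : ℂ)‖ = c i := by
      rw [Complex.norm_real, Real.norm_eq_abs, abs_of_pos (hc_pos i)]
    rw [this]
    exact hcnorm i
  set F : H := ∑' i, ((c i : ℝ) : ℂ) • G i with hF_def
  have hev : ∀ w : ℂ, ev F w = ∑' i, ((c i : ℝ) : ℂ) * ev (G i) w := by
    intro w
    rw [← hrepro F w, hF_def]
    have h1 := (innerSL ℂ (K w)).map_tsum hsumH
    simp only [innerSL_apply_apply] at h1
    rw [h1]
    congr 1
    funext i
    rw [inner_smul_right, hrepro]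
  have habs_smul : ∀ (x : ℝ) (z : ℂ), ‖((x:ℝ):ℂ) * z‖ = |x| * ‖z‖ := by
    intro x z
    rw [norm_mul, Complex.norm_real, Real.norm_eq_abs]
  have hnorm_eq : ∀ (i : ℕ) (w : ℂ), ‖((c i : ℝ) : ℂ) * ev (G i) w‖
      = c i * ‖ev (G i) w‖ := by
    intro i w
    rw [norm_mul, Complex.norm_real, Real.norm_eq_abs, abs_of_pos (hc_pos i)]
  -- generic upper bound on D
  have key : ∀ (w : ℂ) (M : ℝ), 0 ≤ M → (∀ i, ‖ev (G i) w‖ ≤ C i * M) →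
      ‖ev F w‖ ≤ 2 * M := by
    intro w M hM hbound
    rw [hev w]
    have hbnd : ∀ i, ‖((c i : ℝ) : ℂ) * ev (G i) w‖ ≤ (1/2)^i * M := by
      intro i
      rw [hnorm_eq i w]
      calc c i * ‖ev (G i) w‖ ≤ c i * (C i * M) :=
            mul_le_mul_of_nonneg_left (hbound i) (hc_pos i).le
        _ = (c i * C i) * M := by ring
        _ ≤ (1/2)^i * M := mul_le_mul_of_nonneg_right (hcC i) hM
    have hsnorm : Summable (fun i => ‖((c i : ℝ) : ℂ) * ev (G i) w‖) :=
      Summable.of_nonneg_of_le (fun i => norm_nonneg _) hbnd (hgeo.mul_right M)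
    calc ‖∑' i, ((c i : ℝ) : ℂ) * ev (G i) w‖
        ≤ ∑' i, ‖((c i : ℝ) : ℂ) * ev (G i) w‖ := norm_tsum_le_tsum_norm hsnorm
      _ ≤ ∑' i, (1/2:ℝ)^i * M := Summable.tsum_le_tsum hbnd hsnorm (hgeo.mul_right M)
      _ = (∑' i, (1/2:ℝ)^i) * M := tsum_mul_right
      _ = 2 * M := by
          rw [tsum_geometric_of_lt_one (by norm_num) (by norm_num)]
          norm_num
  have hFm : F ∈ RmSet ev D m := by
    refine ⟨2, by norm_num, fun z hz => ⟨?_, ?_⟩⟩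
    · exact key z (m z) (hm z hz) (fun i => (hCb i z hz).1)
    · rw [Complex.norm_conj]
      refine key ((starRingEnd ℂ) z) (m z) (hm z hz) (fun i => ?_)
      have h := (hCb i z hz).2
      rwa [Complex.norm_conj] at h
  -- the lower bound at the heights yy i
  have hFlow : ∀ i₀ : ℕ, d i₀ ≤ ‖ev F (((yy i₀ : ℝ) : ℂ) * Complex.I)‖ := by
    intro i₀
    set z : ℂ := ((yy i₀ : ℝ) : ℂ) * Complex.I with hz_def
    have hcs : Summable (fun i => ((c i : ℝ) : ℂ) * ev (G i) z) := by
      have h1 := hsumH.map (innerSL ℂ (K z)) (innerSL ℂ (K z)).continuous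
      refine h1.congr (fun i => ?_)
      show innerSL ℂ (K z) (((c i : ℝ) : ℂ) • G i) = _
      rw [innerSL_apply_apply, inner_smul_right, hrepro]
    have htb : ∀ n : ℕ, ‖((c (n + (i₀+1)) : ℝ) : ℂ) * ev (G (n + (i₀+1))) z‖
        ≤ (1/2:ℝ)^n * ((1/2)^(i₀+1) * d i₀) := by
      intro n
      rw [hnorm_eq]
      have h1 := htail (n + (i₀+1)) i₀ (by omega)
      calc c (n + (i₀+1)) * ‖ev (G (n + (i₀+1))) z‖
          ≤ (1/2)^(n + (i₀+1)) * d i₀ := h1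
        _ = (1/2:ℝ)^n * ((1/2)^(i₀+1) * d i₀) := by rw [pow_add]; ring
    have hts : Summable (fun n => ‖((c (n + (i₀+1)) : ℝ) : ℂ) * ev (G (n + (i₀+1))) z‖) :=
      Summable.of_nonneg_of_le (fun n => norm_nonneg _) htb
        (hgeo.mul_right ((1/2)^(i₀+1) * d i₀))
    have htailb : ‖∑' n, ((c (n + (i₀+1)) : ℝ) : ℂ) * ev (G (n + (i₀+1))) z‖
        ≤ d i₀ := by
      calc ‖∑' n, ((c (n + (i₀+1)) : ℝ) : ℂ) * ev (G (n + (i₀+1))) z‖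
          ≤ ∑' n, ‖((c (n + (i₀+1)) : ℝ) : ℂ) * ev (G (n + (i₀+1))) z‖ :=
            norm_tsum_le_tsum_norm hts
        _ ≤ ∑' n, (1/2:ℝ)^n * ((1/2)^(i₀+1) * d i₀) :=
            Summable.tsum_le_tsum htb hts (hgeo.mul_right _)
        _ = (∑' n, (1/2:ℝ)^n) * ((1/2)^(i₀+1) * d i₀) := tsum_mul_right
        _ = 2 * ((1/2)^(i₀+1) * d i₀) := by
            rw [tsum_geometric_of_lt_one (by norm_num) (by norm_num)]
            norm_num
        _ = (1/2:ℝ)^i₀ * d i₀ := by rw [pow_succ]; ring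
        _ ≤ 1 * d i₀ := mul_le_mul_of_nonneg_right
            (pow_le_one₀ (by norm_num) (by norm_num)) (hd_pos i₀).le
        _ = d i₀ := one_mul _
    have hsplit := Summable.sum_add_tsum_nat_add (f := fun i => ((c i : ℝ) : ℂ) * ev (G i) z)
      (i₀+1) hcs
    have hpart := hmain i₀
    rw [hev z]
    rw [← hsplit]
    set P : ℂ := ∑ i' ∈ Finset.range (i₀+1), ((c i' : ℝ) : ℂ) * ev (G i') z with hP_def
    set T : ℂ := ∑' n, ((c (n + (i₀+1)) : ℝ) : ℂ) * ev (G (n + (i₀+1))) z with hT_def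
    have h5 : ‖P‖ ≤ ‖P + T‖ + ‖T‖ := by
      have h6 := norm_add_le (P + T) (-T)
      rw [norm_neg] at h6
      simpa using h6
    have hpart' : 2 * d i₀ ≤ ‖P‖ := hpart
    linarith
  -- F ≠ 0
  have hF0 : F ≠ 0 := by
    intro h0
    have h1 := hFlow 0
    rw [h0, map_zero] at h1
    simp only [Pi.zero_apply, map_zero, norm_zero] at h1
    linarith [hd_pos 0]
  -- lower bound on the log-ratio at heights yy i
  have hglow : ∀ i : ℕ, σ - 2/((i:ℝ)+1) ≤ gfun ev E F (yy i) := by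
    intro i
    have hEp := heA0 (yy i) (hy_one i)
    have hEp' : 0 < ‖E (((yy i : ℝ) : ℂ) * Complex.I)‖ := hEp
    have hq1 : c i / 8 * Real.exp (rr i * yy i) ≤
        ‖ev F (((yy i : ℝ) : ℂ) * Complex.I)‖ /
          ‖E (((yy i : ℝ) : ℂ) * Complex.I)‖ := by
      rw [le_div_iff₀ hEp']
      calc c i / 8 * Real.exp (rr i * yy i) * ‖E (((yy i : ℝ) : ℂ) * Complex.I)‖
          = c i / 8 * (Real.exp (rr i * yy i) * eA (yy i)) := by rw [heA_def]; ring
        _ ≤ c i / 8 * ‖φ i (((yy i : ℝ) : ℂ) * Complex.I)‖ :=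
            mul_le_mul_of_nonneg_left (hbig i).le (by linarith [hc_pos i])
        _ = d i := (hd_eq i).symm
        _ ≤ ‖ev F (((yy i : ℝ) : ℂ) * Complex.I)‖ := hFlow i
    have hqpos : 0 < c i / 8 * Real.exp (rr i * yy i) :=
      mul_pos (by linarith [hc_pos i]) (Real.exp_pos _)
    have hlog1 : Real.log (c i / 8) + rr i * yy i ≤
        Real.log (‖ev F (((yy i : ℝ) : ℂ) * Complex.I)‖ /
          ‖E (((yy i : ℝ) : ℂ) * Complex.I)‖) := by
      calc Real.log (c i / 8) + rr i * yy i
          = Real.log (c i / 8 * Real.exp (rr i * yy i)) := by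
            rw [Real.log_mul (by linarith [hc_pos i] : (0:ℝ) < c i / 8).ne' (Real.exp_ne_zero _),
              Real.log_exp]
        _ ≤ _ := Real.log_le_log hqpos hq1
    have hdiv : (Real.log (c i / 8) + rr i * yy i) / yy i ≤ gfun ev E F (yy i) := by
      unfold gfun
      gcongr
      exact (hy_pos i).le
    have hsplit2 : (Real.log (c i / 8) + rr i * yy i) / yy i
        = Real.log (c i / 8) / yy i + rr i := by
      rw [add_div, mul_div_assoc, div_self (hy_pos i).ne', mul_one]
    rw [hsplit2] at hdiv
    have h8 := hlogb i
    have h9 : rr i = σ - 1/((i:ℝ)+1) := rfl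
    calc σ - 2/((i:ℝ)+1) = -(1/((i:ℝ)+1)) + (σ - 1/((i:ℝ)+1)) := by ring
      _ ≤ Real.log (c i / 8) / yy i + rr i := by rw [h9]; exact add_le_add h8 le_rfl
      _ ≤ gfun ev E F (yy i) := hdiv
  -- mean type of F is at least s
  have hmtF_ge : s ≤ meanType ev E F := by
    rw [meanType_eq, hσ]
    by_contra hlt
    push_neg at hlt
    obtain ⟨ce, h1, h2⟩ := EReal.lt_iff_exists_real_btwn.mp hlt
    have hce : ce < σ := by exact_mod_cast h2
    have hev2 : ∀ᶠ y in (atTop : Filter ℝ), ((gfun ev E F y : ℝ) : EReal) < (ce : EReal) :=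
      Filter.eventually_lt_of_limsup_lt h1
    obtain ⟨B, hB⟩ := Filter.eventually_atTop.mp hev2
    obtain ⟨n, hn⟩ := exists_nat_gt (max B (2/(σ - ce)))
    have hnB : B ≤ yy n := by
      have h3 : B ≤ (n:ℝ) := le_trans (le_max_left _ _) hn.le
      have h4 : (n:ℝ) ≤ (n:ℝ) + 1 := by linarith
      linarith [hy_ge n]
    have hgn := hB (yy n) hnB
    have hgn' : gfun ev E F (yy n) < ce := by exact_mod_cast hgn
    have hlow := hglow n
    have hpos : (0:ℝ) < σ - ce := by linarith
    have h2n : 2/(σ - ce) < (n:ℝ) := lt_of_le_of_lt (le_max_right _ _) hn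
    have hfrac : 2/((n:ℝ)+1) < σ - ce := by
      rw [div_lt_iff₀ (by positivity : (0:ℝ) < (n:ℝ)+1)]
      rw [div_lt_iff₀ hpos] at h2n
      nlinarith
    linarith
  have hmtF_le : meanType ev E F ≤ s := le_sSup (hmemS F hFm hF0)
  exact hcon F hFm hF0 (le_antisymm hmtF_le hmtF_ge)
end
end

section
/- The following are equivalent: (1) there exists C > 0 such that ‖F‖_m ≤ C·‖F‖_H for all F ∈ R_m(H) (the norms ‖·‖_m and ‖·‖_H are equivalent on R_m(H)); (2) R_m(H) is a closed subset of H with respect to the norm ‖·‖_H; (3) R_m(H) = H. -/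
open Complex Filter Topology

open scoped InnerProductSpace

noncomputable section

section Aux

variable {H : Type*} [NormedAddCommGroup H] [InnerProductSpace ℂ H]
  (ev : H →ₗ[ℂ] (ℂ → ℂ)) (D : Set ℂ) (m : ℂ → ℝ)

lemma rmset_mem_iff (F : H) : F ∈ RmSet ev D m ↔ ∃ C : ℝ, 0 ≤ C ∧ ∀ z ∈ D,
    ‖ev F z‖ ≤ C * m z ∧
    ‖ev F ((starRingEnd ℂ) z)‖ ≤ C * m z := by
  unfold RmSet
  simp only [Set.mem_setOf_eq, Complex.norm_conj]

/-- `RmSet` as a submodule. -/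
def RmSub : Submodule ℂ H where
  carrier := RmSet ev D m
  zero_mem' := by
    refine ⟨0, le_rfl, fun z hz => ?_⟩
    simp
  add_mem' := by
    rintro F G ⟨C1, h10, h1⟩ ⟨C2, h20, h2⟩
    refine ⟨C1 + C2, by linarith, fun z hz => ?_⟩
    obtain ⟨e1, e1'⟩ := h1 z hz
    obtain ⟨e2, e2'⟩ := h2 z hz
    constructor
    · calc ‖ev (F + G) z‖ = ‖ev F z + ev G z‖ := by
            simp [map_add]
        _ ≤ ‖ev F z‖ + ‖ev G z‖ := norm_add_le _ _
        _ ≤ (C1 + C2) * m z := by rw [add_mul]; exact add_le_add e1 e2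
    · calc ‖(starRingEnd ℂ) (ev (F + G) ((starRingEnd ℂ) z))‖
          = ‖(starRingEnd ℂ) (ev F ((starRingEnd ℂ) z))
              + (starRingEnd ℂ) (ev G ((starRingEnd ℂ) z))‖ := by
            simp [map_add]
        _ ≤ _ + _ := norm_add_le _ _
        _ ≤ (C1 + C2) * m z := by rw [add_mul]; exact add_le_add e1' e2'
  smul_mem' := by
    rintro c F ⟨C1, h10, h1⟩
    refine ⟨‖c‖ * C1, mul_nonneg (norm_nonneg c) h10, fun z hz => ?_⟩
    obtain ⟨e1, e1'⟩ := h1 z hz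
    constructor
    · calc ‖ev (c • F) z‖ = ‖c‖ * ‖ev F z‖ := by
            simp [map_smul]
        _ ≤ ‖c‖ * (C1 * m z) :=
            mul_le_mul_of_nonneg_left e1 (norm_nonneg c)
        _ = ‖c‖ * C1 * m z := by ring
    · calc ‖(starRingEnd ℂ) (ev (c • F) ((starRingEnd ℂ) z))‖
          = ‖c‖ * ‖(starRingEnd ℂ) (ev F ((starRingEnd ℂ) z))‖ := by
            simp [map_smul]
        _ ≤ ‖c‖ * (C1 * m z) :=
            mul_le_mul_of_nonneg_left e1' (norm_nonneg c)
        _ = ‖c‖ * C1 * m z := by ring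

lemma pointwise_bound (hm0 : ∀ z ∈ D, 0 < m z) {F : H} (hF : F ∈ RmSet ev D m)
    {z : ℂ} (hz : z ∈ D) :
    ‖ev F z‖ ≤ mnorm ev D m F * m z ∧
    ‖ev F ((starRingEnd ℂ) z)‖ ≤ mnorm ev D m F * m z := by
  set S := {C : ℝ | 0 ≤ C ∧ ∀ z ∈ D,
      ‖ev F z‖ ≤ C * m z ∧
      ‖(starRingEnd ℂ) (ev F ((starRingEnd ℂ) z))‖ ≤ C * m z} with hS
  have hne : S.Nonempty := hF
  have hmz := hm0 z hz
  have h1 : ‖ev F z‖ / m z ≤ sInf S := by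
    refine le_csInf hne fun b hb => ?_
    exact (div_le_iff₀ hmz).2 (hb.2 z hz).1
  have h2 : ‖ev F ((starRingEnd ℂ) z)‖ / m z ≤ sInf S := by
    refine le_csInf hne fun b hb => ?_
    refine (div_le_iff₀ hmz).2 ?_
    have := (hb.2 z hz).2
    rwa [Complex.norm_conj] at this
  have hle : sInf S ≤ mnorm ev D m F := le_max_right _ _
  constructor
  · have := (div_le_iff₀ hmz).1 (h1.trans hle)
    linarith
  · have := (div_le_iff₀ hmz).1 (h2.trans hle)
    linarith

lemma mnorm_le (hm0 : ∀ z ∈ D, 0 < m z) {F : H} {C : ℝ} (hC0 : 0 ≤ C)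
    (h : ∀ z ∈ D, ‖ev F z‖ ≤ C * m z ∧
      ‖ev F ((starRingEnd ℂ) z)‖ ≤ C * m z) :
    mnorm ev D m F ≤ max ‖F‖ C := by
  refine max_le_max le_rfl ?_
  refine csInf_le ⟨0, fun b hb => hb.1⟩ ?_
  exact ⟨hC0, fun z hz => ⟨(h z hz).1, by rw [Complex.norm_conj]; exact (h z hz).2⟩⟩

end Aux



section KB
variable {H : Type*} [NormedAddCommGroup H] [InnerProductSpace ℂ H]
  (ev : H →ₗ[ℂ] (ℂ → ℂ)) (E : ℂ → ℂ) (K : ℂ → H)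

/-- Generic bound for the kernel via the explicit formula. -/
lemma K_formula_bound
    (hKform : ∀ w z : ℂ, z ≠ (starRingEnd ℂ) w →
      ev (K w) z = (E z * (starRingEnd ℂ) (E w) -
          (starRingEnd ℂ) (E ((starRingEnd ℂ) z)) * E ((starRingEnd ℂ) w)) /
        (2 * (Real.pi : ℂ) * Complex.I * ((starRingEnd ℂ) w - z)))
    (w ζ : ℂ) (hne : ζ ≠ (starRingEnd ℂ) w) (e : ℝ)
    (h1 : ‖E ζ‖ ≤ e) (h2 : ‖E ((starRingEnd ℂ) ζ)‖ ≤ e)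
    (d : ℝ) (hd : 0 < d) (hdist : d ≤ ‖(starRingEnd ℂ) w - ζ‖) :
    ‖ev (K w) ζ‖ ≤
      e * (‖E w‖ + ‖E ((starRingEnd ℂ) w)‖) / (2 * Real.pi * d) := by
  have he0 : 0 ≤ e := (norm_nonneg _).trans h1
  rw [hKform w ζ hne, norm_div]
  have hnum : ‖E ζ * (starRingEnd ℂ) (E w) -
      (starRingEnd ℂ) (E ((starRingEnd ℂ) ζ)) * E ((starRingEnd ℂ) w)‖ ≤
      e * (‖E w‖ + ‖E ((starRingEnd ℂ) w)‖) := by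
    calc ‖E ζ * (starRingEnd ℂ) (E w) -
        (starRingEnd ℂ) (E ((starRingEnd ℂ) ζ)) * E ((starRingEnd ℂ) w)‖
        ≤ ‖E ζ * (starRingEnd ℂ) (E w)‖ +
          ‖(starRingEnd ℂ) (E ((starRingEnd ℂ) ζ)) * E ((starRingEnd ℂ) w)‖ :=
          norm_sub_le _ _
      _ = ‖E ζ‖ * ‖E w‖ +
          ‖E ((starRingEnd ℂ) ζ)‖ * ‖E ((starRingEnd ℂ) w)‖ := by
          simp [map_mul, Complex.norm_conj]
      _ ≤ e * ‖E w‖ + e * ‖E ((starRingEnd ℂ) w)‖ := by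
          gcongr
      _ = e * (‖E w‖ + ‖E ((starRingEnd ℂ) w)‖) := by ring
  have hden : 2 * Real.pi * d ≤
      ‖2 * (Real.pi : ℂ) * Complex.I * ((starRingEnd ℂ) w - ζ)‖ := by
    have : ‖2 * (Real.pi : ℂ) * Complex.I * ((starRingEnd ℂ) w - ζ)‖ =
        2 * Real.pi * ‖(starRingEnd ℂ) w - ζ‖ := by
      simp [Complex.norm_two, Complex.norm_real,
        _root_.abs_of_pos Real.pi_pos]
    rw [this]
    have : (0:ℝ) < 2 * Real.pi := by positivity
    nlinarith
  exact div_le_div₀ (by positivity) hnum (by positivity) hden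

end KB

section KM
variable {H : Type*} [NormedAddCommGroup H] [InnerProductSpace ℂ H]

lemma K_mem_RmSet (ev : H →ₗ[ℂ] (ℂ → ℂ))
    (hentire : ∀ F : H, Differentiable ℂ (ev F))
    (E : ℂ → ℂ) (hE : Differentiable ℂ E)
    (hHB : ∀ z : ℂ, 0 < z.im → ‖E ((starRingEnd ℂ) z)‖ < ‖E z‖)
    (K : ℂ → H)
    (hKform : ∀ w z : ℂ, z ≠ (starRingEnd ℂ) w →
      ev (K w) z = (E z * (starRingEnd ℂ) (E w) -
          (starRingEnd ℂ) (E ((starRingEnd ℂ) z)) * E ((starRingEnd ℂ) w)) /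
        (2 * (Real.pi : ℂ) * Complex.I * ((starRingEnd ℂ) w - z)))
    (D : Set ℂ) (hD : D = {z : ℂ | ∃ y : ℝ, 1 ≤ y ∧ z = (y : ℂ) * Complex.I})
    (m : ℂ → ℝ) (hm : ∀ z : ℂ, m z = ‖E z‖ / ‖z + Complex.I‖)
    (w : ℂ) : K w ∈ RmSet ev D m := by
  set a : ℝ := ‖E w‖ + ‖E ((starRingEnd ℂ) w)‖ with ha
  have ha0 : 0 ≤ a := by positivity
  set Y : ℝ := 2 * |w.im| + 2 with hY
  -- facts about points on D
  have him : ∀ y : ℝ, ((y:ℂ) * Complex.I).im = y := fun y => by simp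
  have hEpos : ∀ y : ℝ, 1 ≤ y → 0 < ‖E ((y:ℂ) * Complex.I)‖ := by
    intro y hy
    have := hHB ((y:ℂ) * Complex.I) (by rw [him]; linarith)
    exact (norm_nonneg _).trans_lt this
  have hEle : ∀ y : ℝ, 1 ≤ y →
      ‖E ((starRingEnd ℂ) ((y:ℂ) * Complex.I))‖ ≤
        ‖E ((y:ℂ) * Complex.I)‖ := by
    intro y hy
    exact (hHB ((y:ℂ) * Complex.I) (by rw [him]; linarith)).le
  have hmz : ∀ y : ℝ, 1 ≤ y →
      m ((y:ℂ) * Complex.I) = ‖E ((y:ℂ) * Complex.I)‖ / (y + 1) := by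
    intro y hy
    rw [hm]
    congr 1
    have h1 : ((y:ℂ) * Complex.I + Complex.I) = ((y + 1 : ℝ) : ℂ) * Complex.I := by
      push_cast; ring
    rw [h1, norm_mul, Complex.norm_real, Real.norm_eq_abs, Complex.norm_I, mul_one,
      _root_.abs_of_nonneg (by linarith : (0:ℝ) ≤ y + 1)]
  -- compact part
  obtain ⟨C₁, hC₁⟩ : ∃ C₁, ∀ y ∈ Set.Icc (1:ℝ) Y,
      ‖(‖ev (K w) ((y:ℂ) * Complex.I)‖ +
        ‖ev (K w) (-((y:ℂ) * Complex.I))‖) * (y + 1) /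
        ‖E ((y:ℂ) * Complex.I)‖‖ ≤ C₁ := by
    refine (isCompact_Icc).exists_bound_of_continuousOn ?_
    have hc1 : Continuous fun y : ℝ => ((y:ℂ) * Complex.I) :=
      (Complex.continuous_ofReal.mul continuous_const)
    have hc2 : Continuous fun y : ℝ =>
        (‖ev (K w) ((y:ℂ) * Complex.I)‖ +
          ‖ev (K w) (-((y:ℂ) * Complex.I))‖) * (y + 1) := by
      refine Continuous.mul ?_ (by continuity)
      exact ((continuous_norm.comp ((hentire (K w)).continuous.comp hc1)).add
        (continuous_norm.comp ((hentire (K w)).continuous.comp hc1.neg)))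
    refine ContinuousOn.div hc2.continuousOn ?_ ?_
    · exact (continuous_norm.comp (hE.continuous.comp hc1)).continuousOn
    · intro y hy
      exact (hEpos y hy.1).ne'
  set C : ℝ := max (max C₁ 0) (a / Real.pi) with hC
  have hCnn : 0 ≤ C := le_trans (le_max_right C₁ 0) (le_max_left _ _)
  refine ⟨C, hCnn, ?_⟩
  intro z hz
  rw [hD] at hz
  obtain ⟨y, hy1, rfl⟩ := hz
  have hconjz : (starRingEnd ℂ) ((y:ℂ) * Complex.I) = -((y:ℂ) * Complex.I) := by simp
  have hmpos : 0 < m ((y:ℂ) * Complex.I) := by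
    rw [hmz y hy1]
    exact div_pos (hEpos y hy1) (by linarith)
  -- reduce second condition
  rw [hconjz, Complex.norm_conj]
  rcases le_or_gt y Y with hyY | hyY
  · -- compact case
    have hf := hC₁ y ⟨hy1, hyY⟩
    have hfle : (‖ev (K w) ((y:ℂ) * Complex.I)‖ +
        ‖ev (K w) (-((y:ℂ) * Complex.I))‖) * (y + 1) /
        ‖E ((y:ℂ) * Complex.I)‖ ≤ C := by
      calc _ ≤ ‖_‖ := le_abs_self _
        _ ≤ C₁ := hf
        _ ≤ C := le_trans (le_max_left C₁ 0) (le_max_left _ _)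
    have hepos := hEpos y hy1
    have hsum : ‖ev (K w) ((y:ℂ) * Complex.I)‖ +
        ‖ev (K w) (-((y:ℂ) * Complex.I))‖ ≤ C * m ((y:ℂ) * Complex.I) := by
      rw [hmz y hy1, ← mul_div_assoc]
      rw [div_le_iff₀ hepos] at hfle
      rw [le_div_iff₀ (by linarith : (0:ℝ) < y + 1)]
      nlinarith [hfle]
    constructor
    · exact le_trans (le_add_of_nonneg_right (norm_nonneg _)) hsum
    · exact le_trans (le_add_of_nonneg_left (norm_nonneg _)) hsum
  · -- far case, via the formula
    have hyim : |w.im| < y := by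
      have : 0 ≤ |w.im| := abs_nonneg _
      linarith
    have hdist0 : (0:ℝ) < (y + 1) / 2 := by linarith
    have key : ∀ ζ : ℂ, ζ.im = y ∨ ζ.im = -y →
        ‖E ζ‖ ≤ ‖E ((y:ℂ) * Complex.I)‖ →
        ‖E ((starRingEnd ℂ) ζ)‖ ≤ ‖E ((y:ℂ) * Complex.I)‖ →
        ‖ev (K w) ζ‖ ≤ C * m ((y:ℂ) * Complex.I) := by
      intro ζ him2 hb1 hb2
      have hne : ζ ≠ (starRingEnd ℂ) w := by
        intro h
        have himeq : ζ.im = -w.im := by rw [h]; simp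
        have b1 := le_abs_self w.im
        have b2 := neg_abs_le w.im
        rcases him2 with h' | h' <;> rw [h'] at himeq <;> linarith
      have hdist : (y + 1) / 2 ≤ ‖(starRingEnd ℂ) w - ζ‖ := by
        have h1 : |((starRingEnd ℂ) w - ζ).im| ≤ ‖(starRingEnd ℂ) w - ζ‖ :=
          Complex.abs_im_le_norm _
        have h2 : ((starRingEnd ℂ) w - ζ).im = -w.im - ζ.im := by simp
        have h3 : (y + 1) / 2 ≤ |(-w.im - ζ.im)| := by
          have ht := abs_sub_abs_le_abs_sub (-ζ.im) w.im
          rw [show -ζ.im - w.im = -w.im - ζ.im from by ring] at ht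
          have habs : |(-ζ.im)| = y := by
            rcases him2 with h' | h' <;> rw [h'] <;>
              simp [_root_.abs_of_nonneg (by linarith : (0:ℝ) ≤ y)]
          rw [habs] at ht
          linarith
        calc (y+1)/2 ≤ |(-w.im - ζ.im)| := h3
          _ = |((starRingEnd ℂ) w - ζ).im| := by rw [h2]
          _ ≤ _ := h1
      have := K_formula_bound ev E K hKform w ζ hne
        (‖E ((y:ℂ) * Complex.I)‖) hb1 hb2 ((y+1)/2) hdist0 hdist
      refine this.trans ?_
      rw [hmz y hy1]
      have hpi := Real.pi_pos
      have hC2 : a / Real.pi ≤ C := le_max_right _ _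
      have heq : ‖E ((y:ℂ) * Complex.I)‖ * a / (2 * Real.pi * ((y+1)/2)) =
          (a / Real.pi) * (‖E ((y:ℂ) * Complex.I)‖ / (y + 1)) := by
        field_simp
      rw [heq]
      have hnn : 0 ≤ ‖E ((y:ℂ) * Complex.I)‖ / (y + 1) := by positivity
      exact mul_le_mul_of_nonneg_right hC2 hnn
    constructor
    · refine key ((y:ℂ) * Complex.I) (Or.inl (him y)) le_rfl ?_
      exact hEle y hy1
    · refine key (-((y:ℂ) * Complex.I)) (Or.inr (by simp)) ?_ ?_
      · rw [← hconjz]; exact hEle y hy1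
      · rw [← hconjz, Complex.conj_conj]

end KM

section Main
variable {H : Type*} [NormedAddCommGroup H] [InnerProductSpace ℂ H] [CompleteSpace H]

lemma rm_dense (ev : H →ₗ[ℂ] (ℂ → ℂ)) (hinj : Function.Injective ev)
    (K : ℂ → H) (hrepro : ∀ (F : H) (w : ℂ), ⟪K w, F⟫_ℂ = ev F w)
    (D : Set ℂ) (m : ℂ → ℝ) (hKmem : ∀ w, K w ∈ RmSet ev D m) :
    (Set.univ : Set H) ⊆ closure (RmSet ev D m) := by
  have hspan : Submodule.span ℂ (Set.range K) ≤ RmSub ev D m := by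
    rw [Submodule.span_le]
    rintro _ ⟨w, rfl⟩
    exact hKmem w
  have horth : (Submodule.span ℂ (Set.range K))ᗮ = ⊥ := by
    rw [Submodule.eq_bot_iff]
    intro F hF
    have hz : ∀ w : ℂ, ev F w = 0 := by
      intro w
      rw [← hrepro]
      exact (Submodule.mem_orthogonal _ _).1 hF (K w)
        (Submodule.subset_span (Set.mem_range_self w))
    apply hinj
    rw [map_zero]
    funext w
    exact hz w
  have hclos : (Submodule.span ℂ (Set.range K)).topologicalClosure = ⊤ := by
    rw [← Submodule.orthogonal_orthogonal_eq_closure, horth,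
      Submodule.bot_orthogonal_eq_top]
  calc (Set.univ : Set H)
      = ((⊤ : Submodule ℂ H) : Set H) := rfl
    _ = closure ((Submodule.span ℂ (Set.range K) : Submodule ℂ H) : Set H) := by
        rw [← hclos, Submodule.topologicalClosure_coe]
    _ ⊆ closure (RmSet ev D m) := closure_mono hspan

end Main

/-- **Statement 6.** For the majorant `m = m_E` restricted to `D = i[1,∞)` in
`H = H(E)`, the following are equivalent: (1) `‖·‖_m` and `‖·‖_H` are equivalent on
`R_m(H)`; (2) `R_m(H)` is `‖·‖_H`-closed; (3) `R_m(H) = H`. -/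
theorem rm_norm_equiv_iff_closed_iff_all
    {H : Type*} [NormedAddCommGroup H] [InnerProductSpace ℂ H] [CompleteSpace H]
    (ev : H →ₗ[ℂ] (ℂ → ℂ)) (hinj : Function.Injective ev)
    (hentire : ∀ F : H, Differentiable ℂ (ev F))
    (E : ℂ → ℂ) (hE : Differentiable ℂ E)
    (hHB : ∀ z : ℂ, 0 < z.im → ‖E ((starRingEnd ℂ) z)‖ < ‖E z‖)
    (K : ℂ → H)
    (hKform : ∀ w z : ℂ, z ≠ (starRingEnd ℂ) w →
      ev (K w) z = (E z * (starRingEnd ℂ) (E w) -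
          (starRingEnd ℂ) (E ((starRingEnd ℂ) z)) * E ((starRingEnd ℂ) w)) /
        (2 * (Real.pi : ℂ) * Complex.I * ((starRingEnd ℂ) w - z)))
    (hrepro : ∀ (F : H) (w : ℂ), ⟪K w, F⟫_ℂ = ev F w)
    (hinf : ¬ FiniteDimensional ℂ H)
    (hnz : ∀ x : ℝ, ∃ F : H, ev F (x : ℂ) ≠ 0)
    (D : Set ℂ) (hD : D = {z : ℂ | ∃ y : ℝ, 1 ≤ y ∧ z = (y : ℂ) * Complex.I})
    (m : ℂ → ℝ) (hm : ∀ z : ℂ, m z = ‖E z‖ / ‖z + Complex.I‖) :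
    ((∃ C : ℝ, 0 < C ∧ ∀ F ∈ RmSet ev D m, mnorm ev D m F ≤ C * ‖F‖) ↔
        IsClosed (RmSet ev D m)) ∧
      (IsClosed (RmSet ev D m) ↔ RmSet ev D m = Set.univ) := by
  -- positivity of the majorant on D
  have hm0 : ∀ z ∈ D, 0 < m z := by
    intro z hz
    rw [hD] at hz
    obtain ⟨y, hy, rfl⟩ := hz
    rw [hm]
    have h1 : 0 < ‖E ((y:ℂ) * Complex.I)‖ := by
      refine (norm_nonneg _).trans_lt (hHB _ ?_)
      simp; linarith
    refine div_pos h1 (norm_pos_iff.mpr ?_)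
    intro h
    have := congrArg Complex.im h
    simp at this
    linarith
  have hKmem : ∀ w, K w ∈ RmSet ev D m :=
    K_mem_RmSet ev hentire E hE hHB K hKform D hD m hm
  have hdense := rm_dense ev hinj K hrepro D m hKmem
  -- closed → everything
  have h23 : IsClosed (RmSet ev D m) → RmSet ev D m = Set.univ := by
    intro hcl
    refine Set.eq_univ_of_univ_subset ?_
    rw [← hcl.closure_eq]
    exact hdense
  -- all → norm equivalence, via Banach–Steinhaus
  have h31 : RmSet ev D m = Set.univ →
      ∃ C : ℝ, 0 < C ∧ ∀ F ∈ RmSet ev D m, mnorm ev D m F ≤ C * ‖F‖ := by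
    intro huniv
    set g : {z // z ∈ D} × Bool → H →L[ℂ] ℂ := fun p =>
      (m p.1)⁻¹ • innerSL ℂ (K (if p.2 then (p.1 : ℂ) else (starRingEnd ℂ) (p.1 : ℂ)))
      with hg
    have hgapp : ∀ (p : {z // z ∈ D} × Bool) (F : H), ‖g p F‖ =
        (m (p.1 : ℂ))⁻¹ *
          ‖ev F (if p.2 then (p.1 : ℂ) else (starRingEnd ℂ) (p.1 : ℂ))‖ := by
      intro p F
      have hmp := hm0 _ p.1.2
      rw [hg]
      simp only [ContinuousLinearMap.smul_apply, innerSL_apply_apply, hrepro, norm_smul]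
      rw [Real.norm_eq_abs, _root_.abs_of_nonneg (by positivity)]
    have hptwise : ∀ F : H, ∃ C : ℝ, ∀ p, ‖g p F‖ ≤ C := by
      intro F
      have hF : F ∈ RmSet ev D m := by rw [huniv]; trivial
      obtain ⟨C, hC0, hC⟩ := hF
      refine ⟨C, fun p => ?_⟩
      have hmp := hm0 _ p.1.2
      rw [hgapp]
      have hb : ‖ev F (if p.2 then (p.1 : ℂ) else (starRingEnd ℂ) (p.1 : ℂ))‖
          ≤ C * m (p.1 : ℂ) := by
        rcases p.2 with _ | _
        · simp only [Bool.false_eq_true, if_false]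
          have := (hC _ p.1.2).2
          rwa [Complex.norm_conj] at this
        · simp only [if_true]
          exact (hC _ p.1.2).1
      calc (m (p.1:ℂ))⁻¹ * ‖ev F _‖ ≤ (m (p.1:ℂ))⁻¹ * (C * m (p.1:ℂ)) :=
            mul_le_mul_of_nonneg_left hb (by positivity)
        _ = C := by field_simp
    obtain ⟨C', hC'⟩ := banach_steinhaus hptwise
    set C'' : ℝ := max C' 0 with hC''
    refine ⟨max C'' 1, lt_of_lt_of_le one_pos (le_max_right _ _), fun F _ => ?_⟩
    have hbd : ∀ z ∈ D, ‖ev F z‖ ≤ C'' * ‖F‖ * m z ∧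
        ‖ev F ((starRingEnd ℂ) z)‖ ≤ C'' * ‖F‖ * m z := by
      intro z hz
      have hmp := hm0 z hz
      have key : ∀ b : Bool, ‖ev F (if b then z else (starRingEnd ℂ) z)‖
          ≤ C'' * ‖F‖ * m z := by
        intro b
        have h1 : ‖g (⟨z, hz⟩, b) F‖ ≤ C' * ‖F‖ :=
          le_trans ((g (⟨z, hz⟩, b)).le_opNorm F)
            (mul_le_mul_of_nonneg_right (hC' _) (norm_nonneg F))
        rw [hgapp] at h1
        have h2 : ‖ev F (if b then z else (starRingEnd ℂ) z)‖
            ≤ C' * ‖F‖ * m z := by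
          rw [inv_mul_le_iff₀ hmp] at h1
          exact h1.trans (le_of_eq (by ring))
        have hle : C' ≤ C'' := by rw [hC'']; exact le_max_left _ _
        exact h2.trans (mul_le_mul_of_nonneg_right
          (mul_le_mul_of_nonneg_right hle (norm_nonneg F)) hmp.le)
      exact ⟨by simpa using key true, by simpa using key false⟩
    have hCnn : 0 ≤ C'' * ‖F‖ := mul_nonneg (le_max_right C' 0) (norm_nonneg F)
    have := mnorm_le ev D m hm0 (F := F) hCnn (fun z hz => hbd z hz)
    refine this.trans ?_
    exact max_le (le_mul_of_one_le_left (norm_nonneg F) (le_max_right _ _))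
      (mul_le_mul_of_nonneg_right (le_max_left _ _) (norm_nonneg F))
  -- norm equivalence → closed
  have h12 : (∃ C : ℝ, 0 < C ∧ ∀ F ∈ RmSet ev D m, mnorm ev D m F ≤ C * ‖F‖) →
      IsClosed (RmSet ev D m) := by
    rintro ⟨C, hCpos, hC⟩
    refine isClosed_of_closure_subset ?_
    intro F hFcl
    rw [mem_closure_iff_seq_limit] at hFcl
    obtain ⟨u, hu, hlim⟩ := hFcl
    refine ⟨C * ‖F‖, by positivity, fun z hz => ?_⟩
    have hmnn : 0 ≤ m z := (hm0 z hz).le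
    have keylim : ∀ ζ : ℂ, (∀ n, ‖ev (u n) ζ‖ ≤ C * ‖u n‖ * m z) →
        ‖ev F ζ‖ ≤ C * ‖F‖ * m z := by
      intro ζ hbnd
      have h1 : Tendsto (fun n => ev (u n) ζ) atTop (𝓝 (ev F ζ)) := by
        simp only [← hrepro]
        exact Filter.Tendsto.inner tendsto_const_nhds hlim
      have h2 : Tendsto (fun n => ‖ev (u n) ζ‖) atTop
          (𝓝 (‖ev F ζ‖)) := (continuous_norm.tendsto _).comp h1
      have h3 : Tendsto (fun n => C * ‖u n‖ * m z) atTop (𝓝 (C * ‖F‖ * m z)) :=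
        (hlim.norm.const_mul C).mul_const (m z)
      exact le_of_tendsto_of_tendsto' h2 h3 hbnd
    have hzb := fun n => pointwise_bound ev D m hm0 (hu n) hz
    have hb : ∀ n, mnorm ev D m (u n) ≤ C * ‖u n‖ := fun n => hC (u n) (hu n)
    constructor
    · refine keylim z fun n => ?_
      exact (hzb n).1.trans (mul_le_mul_of_nonneg_right (hb n) hmnn)
    · rw [Complex.norm_conj]
      refine keylim ((starRingEnd ℂ) z) fun n => ?_
      exact (hzb n).2.trans (mul_le_mul_of_nonneg_right (hb n) hmnn)
  exact ⟨⟨h12, fun hcl => h31 (h23 hcl)⟩, ⟨h23, fun he => by rw [he]; exact isClosed_univ⟩⟩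
end
end

section
/- Assume there exists a sequence (w_k)_{k∈ℕ} in the open upper half-plane ℂ⁺ with liminf_{k→∞} Im w_k = 0 and sup_k |Θ(w_k)| < 1. Then there exists an infinite-dimensional linear subspace M of H which is closed in (H, ‖·‖_H) and satisfies M ⊆ R_m(H); consequently there is C > 0 with ‖F‖_m ≤ C·‖F‖_H for all F ∈ M, i.e. the norms ‖·‖_m and ‖·‖_H are equivalent on M. -/
open Complex Filter Topology

open scoped InnerProductSpace

noncomputable section

private lemma le_of_sq_le_sq'' {x y : ℝ} (hy : 0 ≤ y) (h : x^2 ≤ y^2) (hx : 0 ≤ x) : x ≤ y := by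
  nlinarith

private lemma geo_le_two (s : Finset ℕ) : (∑ k ∈ s, (4:ℝ)⁻¹^k) ≤ 2 := by
  refine le_trans ((summable_geometric_of_lt_one (by norm_num) (by norm_num)).sum_le_tsum s
    (fun k _ => by positivity)) ?_
  rw [tsum_geometric_of_lt_one (by norm_num) (by norm_num)]; norm_num

private lemma gram_aux {X Y aj ak p t h Lj Lk : ℝ} (hX : 0 ≤ X) (hY : 0 ≤ Y)
    (haj : 0 < aj) (hak : 0 < ak) (hp : 3 ≤ p) (ht : 0 ≤ t) (hh : 0 < h)
    (hLj0 : 0 ≤ Lj) (hLk0 : 0 ≤ Lk)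
    (hLj : h * X^2/(4*p*aj) ≤ Lj^2) (hLk : h * Y^2/(4*p*ak) ≤ Lk^2)
    (hkey : 16 * ak ≤ t^2*h^2*aj) :
    X*Y/(p*aj) ≤ t*(Lj*Lk) := by
  have hp0 : (0:ℝ) < p := by linarith
  refine le_of_sq_le_sq'' (by positivity) ?_ (by positivity)
  calc (X*Y/(p*aj))^2 = (X^2*Y^2/(16*p^2*aj^2*ak)) * (16*ak) := by field_simp
    _ ≤ (X^2*Y^2/(16*p^2*aj^2*ak)) * (t^2*h^2*aj) :=
        mul_le_mul_of_nonneg_left hkey (by positivity)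
    _ = t^2 * ((h*X^2/(4*p*aj)) * (h*Y^2/(4*p*ak))) := by field_simp; ring
    _ ≤ t^2 * (Lj^2*Lk^2) := by
        refine mul_le_mul_of_nonneg_left ?_ (sq_nonneg t)
        exact mul_le_mul hLj hLk (by positivity) (sq_nonneg Lj)
    _ = (t*(Lj*Lk))^2 := by ring

private lemma pt_aux {X Eiy ak p h Lk y : ℝ} (hX : 0 ≤ X) (hE : 0 ≤ Eiy) (hak : 0 < ak)
    (hp : 3 ≤ p) (hh : 0 < h) (hy : 1 ≤ y) (hLk0 : 0 ≤ Lk)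
    (hLk : h*X^2/(4*p*ak) ≤ Lk^2) :
    2*Eiy*X/(p*y) ≤ Real.sqrt (64*ak/h) * (Eiy/(y+1)) * Lk := by
  have hp0 : (0:ℝ) < p := by linarith
  have hy0 : (0:ℝ) < y := by linarith
  refine le_of_sq_le_sq'' (by positivity) ?_ (by positivity)
  have hs : Real.sqrt (64*ak/h) ^ 2 = 64*ak/h := Real.sq_sqrt (by positivity)
  calc (2*Eiy*X/(p*y))^2 ≤ 16*Eiy^2*X^2/(p*(y+1)^2) := by
        rw [div_pow, div_le_div_iff₀ (by positivity) (by positivity)]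
        have h1 : (y+1)^2 ≤ 4*y^2 := by nlinarith
        have hQ : (0:ℝ) ≤ 4*(Eiy^2*X^2)*p := by positivity
        calc (2*Eiy*X)^2*(p*(y+1)^2) = 4*(Eiy^2*X^2)*p*(y+1)^2 := by ring
          _ ≤ 4*(Eiy^2*X^2)*p*(4*y^2) := mul_le_mul_of_nonneg_left h1 hQ
          _ = 16*(Eiy^2*X^2)*y^2*p := by ring
          _ ≤ 16*(Eiy^2*X^2)*y^2*(p*p) := by
              refine mul_le_mul_of_nonneg_left ?_ (by positivity)
              nlinarith
          _ = 16*Eiy^2*X^2*(p*y)^2 := by ring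
    _ = (64*ak/h)*(Eiy/(y+1))^2*(h*X^2/(4*p*ak)) := by field_simp; ring
    _ ≤ (64*ak/h)*(Eiy/(y+1))^2*Lk^2 :=
        mul_le_mul_of_nonneg_left hLk (by positivity)
    _ = (Real.sqrt (64*ak/h) * (Eiy/(y+1)) * Lk)^2 := by rw [mul_pow, mul_pow, hs]


set_option maxHeartbeats 4000000 in
/-- **Statement 13.** If there is a sequence `(w_k)` in `ℂ⁺` with `liminf Im w_k = 0`
and `sup_k |Θ(w_k)| < 1`, then `R_m(H)` (for `m = m_E|_{i[1,∞)}`) contains an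
infinite-dimensional `‖·‖_H`-closed subspace `M`; in particular `‖·‖_m` and `‖·‖_H`
are equivalent on `M`. -/
theorem rm_contains_infinite_dimensional_closed_subspace
    {H : Type*} [NormedAddCommGroup H] [InnerProductSpace ℂ H] [CompleteSpace H]
    (ev : H →ₗ[ℂ] (ℂ → ℂ)) (hinj : Function.Injective ev)
    (hentire : ∀ F : H, Differentiable ℂ (ev F))
    (E : ℂ → ℂ) (hE : Differentiable ℂ E)
    (hHB : ∀ z : ℂ, 0 < z.im → ‖E ((starRingEnd ℂ) z)‖ < ‖E z‖)
    (K : ℂ → H)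
    (hKform : ∀ w z : ℂ, z ≠ (starRingEnd ℂ) w →
      ev (K w) z = (E z * (starRingEnd ℂ) (E w) -
          (starRingEnd ℂ) (E ((starRingEnd ℂ) z)) * E ((starRingEnd ℂ) w)) /
        (2 * (Real.pi : ℂ) * Complex.I * ((starRingEnd ℂ) w - z)))
    (hrepro : ∀ (F : H) (w : ℂ), ⟪K w, F⟫_ℂ = ev F w)
    (hinf : ¬ FiniteDimensional ℂ H)
    (hnz : ∀ x : ℝ, ∃ F : H, ev F (x : ℂ) ≠ 0)
    (Θ : ℂ → ℂ)
    (hΘ : ∀ z : ℂ, Θ z = (starRingEnd ℂ) (E ((starRingEnd ℂ) z)) / E z)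
    (D : Set ℂ) (hD : D = {z : ℂ | ∃ y : ℝ, 1 ≤ y ∧ z = (y : ℂ) * Complex.I})
    (m : ℂ → ℝ) (hm : ∀ z : ℂ, m z = ‖E z‖ / ‖z + Complex.I‖)
    (w : ℕ → ℂ) (hw : ∀ k, 0 < (w k).im)
    (hliminf : ∀ ε : ℝ, 0 < ε → ∀ N : ℕ, ∃ k ≥ N, (w k).im < ε)
    (hΘlt : ∃ δ : ℝ, δ < 1 ∧ ∀ k, ‖Θ (w k)‖ ≤ δ) :
    ∃ M : Submodule ℂ H, ¬ FiniteDimensional ℂ M ∧ IsClosed (M : Set H) ∧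
      (M : Set H) ⊆ RmSet ev D m ∧
      ∃ C : ℝ, 0 < C ∧ ∀ F ∈ M, mnorm ev D m F ≤ C * ‖F‖ := by
  classical
  obtain ⟨δ, hδ1, hδ2⟩ := hΘlt
  have hδ0 : 0 ≤ δ := le_trans (norm_nonneg _) (hδ2 0)
  set η : ℝ := 1 - δ^2 with hηdef
  have hη0 : 0 < η := by nlinarith
  have hη1 : η ≤ 1 := by nlinarith
  have hπ3 : (3:ℝ) ≤ Real.pi := Real.pi_gt_three.le
  have hπ0 : (0:ℝ) < Real.pi := by linarith
  -- choose points with rapidly decreasing imaginary parts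
  have key : ∀ b : ℝ, 0 < b → ∃ j, (w j).im < b := by
    intro b hb; obtain ⟨k, -, hk⟩ := hliminf b hb 0; exact ⟨k, hk⟩
  have hsel : ∃ idx : ℕ → ℕ, ((w (idx 0)).im < 4⁻¹) ∧ ∀ k,
      (w (idx (k+1))).im < min (η^2 * (4:ℝ)⁻¹^(2*k+15) * (w (idx k)).im) ((4:ℝ)⁻¹^(k+2)) := by
    have step : ∀ k j : ℕ, ∃ j' : ℕ,
        (w j').im < min (η^2 * (4:ℝ)⁻¹^(2*k+15) * (w j).im) ((4:ℝ)⁻¹^(k+2)) := by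
      intro k j
      exact key _ (lt_min (mul_pos (mul_pos (pow_pos hη0 2) (by positivity)) (hw j))
        (by positivity))
    choose f hf using step
    obtain ⟨j0, hj0⟩ := key 4⁻¹ (by norm_num)
    exact ⟨fun n => Nat.rec (motive := fun _ => ℕ) j0 f n, hj0, fun k => hf k _⟩
  obtain ⟨idx, hidx0, hidxS⟩ := hsel
  set z : ℕ → ℂ := fun k => w (idx k) with hzdef
  set a : ℕ → ℝ := fun k => (z k).im with hadef
  have ha_pos : ∀ k, 0 < a k := fun k => hw (idx k)
  have haS : ∀ k, a (k+1) ≤ η^2 * (4:ℝ)⁻¹^(2*k+15) * a k :=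
    fun k => ((hidxS k).trans_le (min_le_left _ _)).le
  have haS2 : ∀ k, a (k+1) ≤ (4:ℝ)⁻¹^(k+2) :=
    fun k => ((hidxS k).trans_le (min_le_right _ _)).le
  have ha_le : ∀ k, a k ≤ (4:ℝ)⁻¹^(k+1) := by
    intro k
    cases k with
    | zero => simpa using hidx0.le
    | succ n => exact haS2 n
  have ha_small : ∀ k, a k ≤ 4⁻¹ := by
    intro k
    refine (ha_le k).trans ?_
    calc (4:ℝ)⁻¹^(k+1) ≤ (4:ℝ)⁻¹^1 :=
          pow_le_pow_of_le_one (by norm_num) (by norm_num) (by omega)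
      _ = 4⁻¹ := pow_one _
  have ha_anti : ∀ j k, j ≤ k → a k ≤ a j := by
    have hstep : ∀ n, a (n+1) ≤ a n := by
      intro n
      refine (haS n).trans ?_
      have h4 : (4:ℝ)⁻¹^(2*n+15) ≤ 1 := pow_le_one₀ (by norm_num) (by norm_num)
      have h5 : η^2 ≤ 1 := pow_le_one₀ hη0.le hη1
      have h6 : η^2 * (4:ℝ)⁻¹^(2*n+15) ≤ 1 :=
        mul_le_one₀ h5 (by positivity) h4
      exact mul_le_of_le_one_left (ha_pos n).le h6
    exact fun j k h => antitone_nat_of_succ_le hstep h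
  -- the key smallness inequality for Gram entries
  have hkey : ∀ j k, j < k → 16 * a k ≤ ((2:ℝ)⁻¹^(j+k+8))^2 * η^2 * a j := by
    intro j k hjk
    obtain ⟨n, rfl⟩ : ∃ n, k = n + 1 := ⟨k-1, by omega⟩
    have h1 : a (n+1) ≤ η^2*(4:ℝ)⁻¹^(2*n+15)*a n := haS n
    have h2 : a n ≤ a j := ha_anti j n (by omega)
    have hsq : ((2:ℝ)⁻¹^(j+(n+1)+8))^2 = (4:ℝ)⁻¹^(j+n+9) := by
      rw [show j+(n+1)+8 = j+n+9 by omega, sq, ← mul_pow]; norm_num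
    have h3 : (16:ℝ)*(4:ℝ)⁻¹^(2*n+15) ≤ (4:ℝ)⁻¹^(j+n+9) := by
      have h5 : (16:ℝ)*(4:ℝ)⁻¹^(2*n+15) = (4:ℝ)⁻¹^(2*n+13) := by
        rw [show 2*n+15 = (2*n+13)+2 by omega, pow_add]; norm_num; ring
      rw [h5]
      exact pow_le_pow_of_le_one (by norm_num) (by norm_num) (by omega)
    have hc : 16*a (n+1) ≤ (4:ℝ)⁻¹^(j+n+9) * η^2 * a j := by
      calc 16*a (n+1) ≤ 16*(η^2*(4:ℝ)⁻¹^(2*n+15)*a n) :=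
            mul_le_mul_of_nonneg_left h1 (by norm_num)
        _ = (16*(4:ℝ)⁻¹^(2*n+15)) * (η^2 * a n) := by ring
        _ ≤ (4:ℝ)⁻¹^(j+n+9) * (η^2*a n) :=
            mul_le_mul_of_nonneg_right h3 (mul_nonneg (sq_nonneg η) (ha_pos n).le)
        _ ≤ (4:ℝ)⁻¹^(j+n+9) * (η^2*a j) := by
            refine mul_le_mul_of_nonneg_left ?_ (by positivity)
            exact mul_le_mul_of_nonneg_left h2 (sq_nonneg η)
        _ = (4:ℝ)⁻¹^(j+n+9) * η^2 * a j := by ring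
    rw [hsq]; exact hc
  -- triangle inequality helper
  have habs_sub : ∀ x y : ℂ, ‖x - y‖ ≤ ‖x‖ + ‖y‖ := by
    intro x y; simpa using norm_sub_le_norm_sub_add_norm_sub x 0 y
  -- general bound on kernel values
  have kerB : ∀ (u v : ℂ) (d : ℝ), v ≠ (starRingEnd ℂ) u → 0 < d →
      d ≤ ‖(starRingEnd ℂ) u - v‖ →
      ‖ev (K u) v‖ ≤ (‖E v‖ * ‖E u‖
        + ‖E ((starRingEnd ℂ) v)‖ * ‖E ((starRingEnd ℂ) u)‖)
          / (2*Real.pi*d) := by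
    intro u v d hne hd0 hd
    rw [hKform u v hne, norm_div]
    have hden : ‖2*(Real.pi:ℂ)*Complex.I*((starRingEnd ℂ) u - v)‖
        = 2*Real.pi*‖(starRingEnd ℂ) u - v‖ := by
      rw [norm_mul, norm_mul, norm_mul, Complex.norm_two, Complex.norm_I, Complex.norm_real, Real.norm_eq_abs,
        _root_.abs_of_nonneg Real.pi_nonneg, mul_one]
    rw [hden]
    have hnum : ‖E v * (starRingEnd ℂ) (E u)
        - (starRingEnd ℂ) (E ((starRingEnd ℂ) v)) * E ((starRingEnd ℂ) u)‖
        ≤ ‖E v‖ * ‖E u‖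
          + ‖E ((starRingEnd ℂ) v)‖ * ‖E ((starRingEnd ℂ) u)‖ := by
      refine le_trans (habs_sub _ _) ?_
      rw [norm_mul, norm_mul, Complex.norm_conj, Complex.norm_conj]
    refine div_le_div₀ (by positivity) hnum (by positivity) ?_
    exact mul_le_mul_of_nonneg_left hd (by positivity)
  -- norm of reproducing kernels
  have normKsq : ∀ u : ℂ, 0 < u.im →
      ‖K u‖^2 = (‖E u‖^2 - ‖E ((starRingEnd ℂ) u)‖^2)
        / (4*Real.pi*u.im) := by
    intro u hu
    have hne : u ≠ (starRingEnd ℂ) u := by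
      intro hh
      have := congrArg Complex.im hh
      simp only [Complex.conj_im] at this
      linarith
    have h1 := hrepro (K u) u
    rw [hKform u u hne] at h1
    have hden : (2*(Real.pi:ℂ)*Complex.I*((starRingEnd ℂ) u - u))
        = ((4*Real.pi*u.im : ℝ) : ℂ) := by
      rw [show (starRingEnd ℂ) u - u = -(((2*u.im:ℝ):ℂ)*Complex.I) by
        rw [← Complex.sub_conj]; push_cast; ring]
      push_cast
      ring_nf
      rw [Complex.I_sq]
      ring
    have hnum : E u * (starRingEnd ℂ) (E u)
        - (starRingEnd ℂ) (E ((starRingEnd ℂ) u)) * E ((starRingEnd ℂ) u)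
        = ((‖E u‖^2 - ‖E ((starRingEnd ℂ) u)‖^2 : ℝ) : ℂ) := by
      rw [Complex.mul_conj, mul_comm ((starRingEnd ℂ) (E ((starRingEnd ℂ) u))) _,
        Complex.mul_conj, Complex.sq_norm, Complex.sq_norm]
      push_cast
      ring
    have h2 : (⟪K u, K u⟫_ℂ)
        = (((‖E u‖^2 - ‖E ((starRingEnd ℂ) u)‖^2)
            /(4*Real.pi*u.im) : ℝ) : ℂ) := by
      rw [h1, hden, hnum, ← Complex.ofReal_div]
    have h3 := inner_self_eq_norm_sq (𝕜 := ℂ) (K u)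
    rw [h2] at h3
    simpa only [RCLike.re_to_complex, Complex.ofReal_re] using h3.symm
    -- |E| at the chosen points
  have hEpos : ∀ k, 0 < ‖E (z k)‖ :=
    fun k => lt_of_le_of_lt (norm_nonneg _) (hHB (z k) (ha_pos k))
  have hEconj_le : ∀ u : ℂ, 0 < u.im →
      ‖E ((starRingEnd ℂ) u)‖ ≤ ‖E u‖ := fun u hu => (hHB u hu).le
  have haim : ∀ k, (z k).im = a k := fun k => rfl
  -- lower bound for the kernel norms
  have hLsq : ∀ k, η * ‖E (z k)‖^2 / (4*Real.pi*(a k)) ≤ ‖K (z k)‖^2 := by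
    intro k
    rw [normKsq (z k) (ha_pos k), haim]
    have hth : ‖E ((starRingEnd ℂ) (z k))‖
        = ‖Θ (z k)‖ * ‖E (z k)‖ := by
      rw [hΘ, norm_div, Complex.norm_conj, div_mul_cancel₀]
      exact (hEpos k).ne'
    have hth2 : ‖E ((starRingEnd ℂ) (z k))‖^2 ≤ δ^2 * ‖E (z k)‖^2 := by
      rw [hth, mul_pow]
      have h1 : ‖Θ (z k)‖^2 ≤ δ^2 := by
        have := hδ2 (idx k)
        nlinarith [norm_nonneg (Θ (z k))]
      exact mul_le_mul_of_nonneg_right h1 (sq_nonneg _)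
    have hnum : η * ‖E (z k)‖^2
        ≤ ‖E (z k)‖^2 - ‖E ((starRingEnd ℂ) (z k))‖^2 := by
      rw [hηdef]; nlinarith
    exact div_le_div_of_nonneg_right hnum (mul_pos (mul_pos (by norm_num) hπ0) (ha_pos k)).le
  have hLpos : ∀ k, 0 < ‖K (z k)‖ := by
    intro k
    have h1 : 0 < ‖K (z k)‖^2 := lt_of_lt_of_le
      (div_pos (mul_pos hη0 (pow_pos (hEpos k) 2))
        (mul_pos (mul_pos (by norm_num) hπ0) (ha_pos k))) (hLsq k)
    nlinarith [norm_nonneg (K (z k))]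
  set e : ℕ → H := fun k => ((‖K (z k)‖ : ℝ) : ℂ)⁻¹ • K (z k) with hedef
  have he_norm : ∀ k, ‖e k‖ = 1 := by
    intro k
    show ‖((‖K (z k)‖ : ℝ) : ℂ)⁻¹ • K (z k)‖ = 1
    rw [norm_smul, norm_inv, Complex.norm_real, Real.norm_eq_abs,
      _root_.abs_of_pos (hLpos k)]
    exact inv_mul_cancel₀ (hLpos k).ne'
  have he_ev : ∀ k v, ev (e k) v = ((‖K (z k)‖ : ℝ) : ℂ)⁻¹ * ev (K (z k)) v := by
    intro k v
    show ev (((‖K (z k)‖ : ℝ) : ℂ)⁻¹ • K (z k)) v = _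
    rw [map_smul]
    simp only [Pi.smul_apply, smul_eq_mul]
  -- Gram entry bound for j < k
  have hKK : ∀ j k, j < k →
      ‖⟪K (z j), K (z k)⟫_ℂ‖ ≤ (2:ℝ)⁻¹^(j+k+8) * (‖K (z j)‖ * ‖K (z k)‖) := by
    intro j k hjk
    have h1 : (⟪K (z j), K (z k)⟫_ℂ) = ev (K (z k)) (z j) := hrepro (K (z k)) (z j)
    have hne : z j ≠ (starRingEnd ℂ) (z k) := by
      intro hh
      have h2 := congrArg Complex.im hh
      rw [Complex.conj_im, haim, haim] at h2
      nlinarith [ha_pos j, ha_pos k]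
    have hd : a j ≤ ‖(starRingEnd ℂ) (z k) - z j‖ := by
      have him : ((starRingEnd ℂ) (z k) - z j).im = -(a k) - a j := by
        rw [Complex.sub_im, Complex.conj_im, haim, haim]
      calc a j ≤ |(-(a k) - a j)| := by
            rw [_root_.abs_of_neg (by nlinarith [ha_pos j, ha_pos k])]
            nlinarith [ha_pos k]
        _ = |((starRingEnd ℂ) (z k) - z j).im| := by rw [him]
        _ ≤ _ := Complex.abs_im_le_norm _
    have h2 := kerB (z k) (z j) (a j) hne (ha_pos j) hd
    rw [← h1] at h2
    have h3 : ‖E (z j)‖ * ‖E (z k)‖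
          + ‖E ((starRingEnd ℂ) (z j))‖ * ‖E ((starRingEnd ℂ) (z k))‖
        ≤ 2 * (‖E (z j)‖ * ‖E (z k)‖) := by
      have := mul_le_mul (hEconj_le (z j) (ha_pos j)) (hEconj_le (z k) (ha_pos k))
        (norm_nonneg _) (norm_nonneg _)
      linarith
    have h4 : ‖⟪K (z j), K (z k)⟫_ℂ‖
        ≤ ‖E (z j)‖ * ‖E (z k)‖ / (Real.pi * a j) := by
      refine h2.trans ?_
      rw [div_le_div_iff₀ (mul_pos (mul_pos (by norm_num) hπ0) (ha_pos j))
        (mul_pos hπ0 (ha_pos j))]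
      nlinarith [mul_le_mul_of_nonneg_right h3
        (mul_pos hπ0 (ha_pos j)).le]
    refine h4.trans ?_
    exact gram_aux (norm_nonneg _) (norm_nonneg _) (ha_pos j) (ha_pos k)
      hπ3 (by positivity) hη0 (norm_nonneg _) (norm_nonneg _) (hLsq j) (hLsq k)
      (hkey j k hjk)
  -- Gram bound for normalized kernels, all j ≠ k
  have hGram : ∀ j k, j ≠ k →
      ‖⟪e j, e k⟫_ℂ‖ ≤ (2:ℝ)⁻¹^j * (2:ℝ)⁻¹^k / 256 := by
    have habs : ∀ j k, ‖⟪e j, e k⟫_ℂ‖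
        = (‖K (z j)‖)⁻¹ * ((‖K (z k)‖)⁻¹ * ‖⟪K (z j), K (z k)⟫_ℂ‖) := by
      intro j k
      show ‖⟪((‖K (z j)‖ : ℝ) : ℂ)⁻¹ • K (z j), ((‖K (z k)‖ : ℝ) : ℂ)⁻¹ • K (z k)⟫_ℂ‖ = _
      simp only [inner_smul_left, inner_smul_right, map_mul, map_inv₀, norm_mul, norm_inv,
        Complex.norm_conj, Complex.norm_real, Real.norm_eq_abs, abs_norm, norm_norm]
      ring
    have main : ∀ j k, j < k →
        ‖⟪e j, e k⟫_ℂ‖ ≤ (2:ℝ)⁻¹^j * (2:ℝ)⁻¹^k / 256 := by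
      intro j k hjk
      rw [habs]
      have h5 : (2:ℝ)⁻¹^j * (2:ℝ)⁻¹^k / 256 = (2:ℝ)⁻¹^(j+k+8) := by
        rw [pow_add, pow_add]; norm_num; ring
      rw [h5]
      have h6 := hKK j k hjk
      calc (‖K (z j)‖)⁻¹ * ((‖K (z k)‖)⁻¹ * ‖⟪K (z j), K (z k)⟫_ℂ‖)
          ≤ (‖K (z j)‖)⁻¹ * ((‖K (z k)‖)⁻¹ * ((2:ℝ)⁻¹^(j+k+8) * (‖K (z j)‖ * ‖K (z k)‖))) := by
            refine mul_le_mul_of_nonneg_left ?_ (by positivity)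
            exact mul_le_mul_of_nonneg_left h6 (by positivity)
        _ = (2:ℝ)⁻¹^(j+k+8) := by
            have hA := (hLpos j).ne'
            have hB := (hLpos k).ne'
            field_simp
    intro j k hjk
    rcases lt_or_gt_of_ne hjk with h | h
    · exact main j k h
    · rw [← inner_conj_symm, Complex.norm_conj]
      refine (main k j h).trans ?_
      rw [mul_comm ((2:ℝ)⁻¹^k) _]
  -- pointwise bounds for normalized kernels on i[1,∞) and its conjugate
  have hmy : ∀ y : ℝ, 1 ≤ y → m ((y:ℂ)*Complex.I) = ‖E ((y:ℂ)*Complex.I)‖ / (y+1) := by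
    intro y hy
    rw [hm]
    congr 1
    rw [show (y:ℂ)*Complex.I + Complex.I = ((y+1:ℝ):ℂ)*Complex.I by push_cast; ring,
      norm_mul, Complex.norm_I, Complex.norm_real, Real.norm_eq_abs, mul_one,
      _root_.abs_of_nonneg (by linarith : (0:ℝ) ≤ y+1)]
  have hyim : ∀ y : ℝ, ((y:ℂ)*Complex.I).im = y := by intro y; simp
  have ptKB : ∀ k, ∀ y : ℝ, 1 ≤ y → ∀ v : ℂ, (v = (y:ℂ)*Complex.I ∨ v = -((y:ℂ)*Complex.I)) →
      ‖ev (K (z k)) v‖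
        ≤ 2 * ‖E ((y:ℂ)*Complex.I)‖ * ‖E (z k)‖ / (Real.pi * y) := by
    intro k y hy v hv
    have hy0 : (0:ℝ) < y := by linarith
    have hEyI : ‖E (-((y:ℂ)*Complex.I))‖ ≤ ‖E ((y:ℂ)*Complex.I)‖ := by
      have h := hEconj_le ((y:ℂ)*Complex.I) (by rw [hyim]; linarith)
      rwa [show (starRingEnd ℂ) ((y:ℂ)*Complex.I) = -((y:ℂ)*Complex.I) by simp] at h
    have hEzk := hEconj_le (z k) (ha_pos k)
    rcases hv with rfl | rfl
    · -- v = iy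
      have hne : (y:ℂ)*Complex.I ≠ (starRingEnd ℂ) (z k) := by
        intro hh
        have h2 := congrArg Complex.im hh
        rw [hyim, Complex.conj_im, haim] at h2
        nlinarith [ha_pos k]
      have hd : y ≤ ‖(starRingEnd ℂ) (z k) - (y:ℂ)*Complex.I‖ := by
        have him : ((starRingEnd ℂ) (z k) - (y:ℂ)*Complex.I).im = -(a k) - y := by
          rw [Complex.sub_im, Complex.conj_im, haim, hyim]
        calc y ≤ |(-(a k) - y)| := by
              rw [_root_.abs_of_neg (by nlinarith [ha_pos k])]
              nlinarith [ha_pos k]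
          _ = |((starRingEnd ℂ) (z k) - (y:ℂ)*Complex.I).im| := by rw [him]
          _ ≤ _ := Complex.abs_im_le_norm _
      have h2 := kerB (z k) ((y:ℂ)*Complex.I) y hne hy0 hd
      refine h2.trans ?_
      clear h2
      have hprod := mul_le_mul hEyI hEzk (norm_nonneg _) (norm_nonneg _)
      have hnum : ‖E ((y:ℂ)*Complex.I)‖ * ‖E (z k)‖
            + ‖E ((starRingEnd ℂ) ((y:ℂ)*Complex.I))‖ * ‖E ((starRingEnd ℂ) (z k))‖
          ≤ 2 * ‖E ((y:ℂ)*Complex.I)‖ * ‖E (z k)‖ := by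
        rw [show (starRingEnd ℂ) ((y:ℂ)*Complex.I) = -((y:ℂ)*Complex.I) by simp]
        linarith [hprod]
      exact div_le_div₀
        (mul_nonneg (mul_nonneg (by norm_num) (norm_nonneg _)) (norm_nonneg _))
        hnum (mul_pos hπ0 hy0) (by linarith [mul_pos hπ0 hy0])
    · -- v = -iy
      have hne : -((y:ℂ)*Complex.I) ≠ (starRingEnd ℂ) (z k) := by
        intro hh
        have h2 := congrArg Complex.im hh
        rw [Complex.neg_im, hyim, Complex.conj_im, haim] at h2
        nlinarith [ha_small k]
      have hd : y/2 ≤ ‖(starRingEnd ℂ) (z k) - -((y:ℂ)*Complex.I)‖ := by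
        have him : ((starRingEnd ℂ) (z k) - -((y:ℂ)*Complex.I)).im = -(a k) + y := by
          rw [Complex.sub_im, Complex.neg_im, Complex.conj_im, haim, hyim]
          ring
        calc y/2 ≤ |(-(a k) + y)| := by
              rw [_root_.abs_of_pos (by nlinarith [ha_small k])]
              nlinarith [ha_small k]
          _ = |((starRingEnd ℂ) (z k) - -((y:ℂ)*Complex.I)).im| := by rw [him]
          _ ≤ _ := Complex.abs_im_le_norm _
      have h2 := kerB (z k) (-((y:ℂ)*Complex.I)) (y/2) hne (by linarith) hd
      refine h2.trans ?_
      have hnum : ‖E (-((y:ℂ)*Complex.I))‖ * ‖E (z k)‖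
            + ‖E ((starRingEnd ℂ) (-((y:ℂ)*Complex.I)))‖ * ‖E ((starRingEnd ℂ) (z k))‖
          ≤ 2 * ‖E ((y:ℂ)*Complex.I)‖ * ‖E (z k)‖ := by
        rw [show (starRingEnd ℂ) (-((y:ℂ)*Complex.I)) = (y:ℂ)*Complex.I by simp]
        linarith [mul_le_mul_of_nonneg_right hEyI (norm_nonneg (E (z k))),
          mul_le_mul_of_nonneg_left hEzk (norm_nonneg (E ((y:ℂ)*Complex.I)))]
      rw [show 2*Real.pi*(y/2) = Real.pi*y by ring]
      exact div_le_div_of_nonneg_right hnum (mul_pos hπ0 hy0).le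
  have ptB : ∀ k, ∀ y : ℝ, 1 ≤ y → ∀ v : ℂ, (v = (y:ℂ)*Complex.I ∨ v = -((y:ℂ)*Complex.I)) →
      ‖ev (e k) v‖ ≤ Real.sqrt (64 * a k / η) * m ((y:ℂ)*Complex.I) := by
    intro k y hy v hv
    have hy0 : (0:ℝ) < y := by linarith
    rw [he_ev, norm_mul, norm_inv, Complex.norm_real, Real.norm_eq_abs, _root_.abs_of_pos (hLpos k)]
    have h1 := ptKB k y hy v hv
    have h2 : 2 * ‖E ((y:ℂ)*Complex.I)‖ * ‖E (z k)‖ / (Real.pi * y)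
        ≤ Real.sqrt (64 * a k / η) * (‖E ((y:ℂ)*Complex.I)‖ / (y+1)) * ‖K (z k)‖ :=
      pt_aux (norm_nonneg _) (norm_nonneg _) (ha_pos k) hπ3 hη0 hy
        (norm_nonneg _) (hLsq k)
    rw [hmy y hy]
    rw [inv_mul_le_iff₀ (hLpos k)]
    refine (h1.trans h2).trans ?_
    rw [mul_comm (Real.sqrt (64 * a k / η) * (‖E ((y:ℂ)*Complex.I)‖ / (y+1))) _]
  -- ⟪e k, e k⟫ = 1
  have hEe : ∀ k, (⟪e k, e k⟫_ℂ) = 1 := by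
    intro k
    rw [inner_self_eq_norm_sq_to_K (𝕜 := ℂ), he_norm k]
    norm_num
  -- Riesz-type lower bound
  have riesz : ∀ (s : Finset ℕ) (c : ℕ → ℂ),
      (∑ k ∈ s, ‖c k‖^2) ≤ 2*‖∑ k ∈ s, c k • e k‖^2 := by
    intro s c
    have expand : (⟪∑ k ∈ s, c k • e k, ∑ k ∈ s, c k • e k⟫_ℂ)
        = ∑ j ∈ s, ∑ k ∈ s, (starRingEnd ℂ) (c j) * c k * (⟪e j, e k⟫_ℂ) := by
      rw [sum_inner]
      refine Finset.sum_congr rfl ?_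
      intro j hj
      rw [inner_smul_left, inner_sum, Finset.mul_sum]
      refine Finset.sum_congr rfl ?_
      intro k hk
      rw [inner_smul_right]
      ring
    have hnormsq : ‖∑ k ∈ s, c k • e k‖^2
        = ∑ j ∈ s, ∑ k ∈ s, ((starRingEnd ℂ) (c j) * c k * (⟪e j, e k⟫_ℂ)).re := by
      have h3 := inner_self_eq_norm_sq (𝕜 := ℂ) (∑ k ∈ s, c k • e k)
      rw [expand] at h3
      rw [← h3, RCLike.re_to_complex]
      rw [Complex.re_sum]
      exact Finset.sum_congr rfl fun j _ => Complex.re_sum _ _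
    have hterm : ∀ j ∈ s, ∀ k ∈ s,
        (if j = k then ‖c j‖^2 else 0)
          - (‖c j‖*(2:ℝ)⁻¹^j) * (‖c k‖*(2:ℝ)⁻¹^k)/256
        ≤ ((starRingEnd ℂ) (c j) * c k * (⟪e j, e k⟫_ℂ)).re := by
      intro j hj k hk
      by_cases hjk : j = k
      · subst hjk
        rw [if_pos rfl]
        rw [hEe j, mul_one]
        have hre : ((starRingEnd ℂ) (c j) * c j).re = ‖c j‖^2 := by
          rw [mul_comm, Complex.mul_conj, Complex.sq_norm]
          simp
        rw [hre]
        have h0 : 0 ≤ (‖c j‖*(2:ℝ)⁻¹^j) * (‖c j‖*(2:ℝ)⁻¹^j)/256 := by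
          positivity
        linarith
      · simp only [if_neg hjk]
        have h1 : ‖(starRingEnd ℂ) (c j) * c k * (⟪e j, e k⟫_ℂ)‖
            ≤ ‖c j‖ * ‖c k‖ * ((2:ℝ)⁻¹^j * (2:ℝ)⁻¹^k / 256) := by
          rw [norm_mul, norm_mul, Complex.norm_conj]
          exact mul_le_mul_of_nonneg_left (hGram j k hjk)
            (mul_nonneg (norm_nonneg _) (norm_nonneg _))
        have h2 := Complex.abs_re_le_norm ((starRingEnd ℂ) (c j) * c k * (⟪e j, e k⟫_ℂ))
        have heq : (‖c j‖*(2:ℝ)⁻¹^j) * (‖c k‖*(2:ℝ)⁻¹^k)/256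
            = ‖c j‖ * ‖c k‖ * ((2:ℝ)⁻¹^j * (2:ℝ)⁻¹^k / 256) := by
          ring
        rw [heq]
        have := neg_abs_le (((starRingEnd ℂ) (c j) * c k * (⟪e j, e k⟫_ℂ)).re)
        linarith
    have hsum : ∑ j ∈ s, ∑ k ∈ s,
        ((if j = k then ‖c j‖^2 else 0)
          - (‖c j‖*(2:ℝ)⁻¹^j) * (‖c k‖*(2:ℝ)⁻¹^k)/256)
        ≤ ‖∑ k ∈ s, c k • e k‖^2 := by
      rw [hnormsq]
      exact Finset.sum_le_sum fun j hj => Finset.sum_le_sum (hterm j hj)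
    have hdiag : ∑ j ∈ s, ∑ k ∈ s, (if j = k then ‖c j‖^2 else 0)
        = ∑ j ∈ s, ‖c j‖^2 := by
      refine Finset.sum_congr rfl ?_
      intro j hj
      rw [Finset.sum_ite_eq s j (fun _ => ‖c j‖^2), if_pos hj]
    have hprodsum : ∑ j ∈ s, ∑ k ∈ s,
        (‖c j‖*(2:ℝ)⁻¹^j) * (‖c k‖*(2:ℝ)⁻¹^k)/256
        = (∑ j ∈ s, ‖c j‖*(2:ℝ)⁻¹^j) * (∑ k ∈ s, ‖c k‖*(2:ℝ)⁻¹^k)/256 := by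
      rw [Finset.sum_mul_sum]
      rw [Finset.sum_div]
      refine Finset.sum_congr rfl ?_
      intro j hj
      rw [Finset.sum_div]
    have hCS : (∑ k ∈ s, ‖c k‖*(2:ℝ)⁻¹^k)^2
        ≤ (∑ k ∈ s, ‖c k‖^2) * 2 := by
      refine le_trans (Finset.sum_mul_sq_le_sq_mul_sq s (fun k => ‖c k‖) (fun k => (2:ℝ)⁻¹^k)) ?_
      refine mul_le_mul_of_nonneg_left ?_ (Finset.sum_nonneg fun k _ => by positivity)
      refine le_trans ?_ (geo_le_two s)
      refine le_of_eq (Finset.sum_congr rfl ?_)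
      intro k hk
      rw [← pow_mul, pow_mul']
      norm_num
    have hT0 : 0 ≤ ∑ k ∈ s, ‖c k‖^2 :=
      Finset.sum_nonneg fun k _ => by positivity
    have hfin : ∑ j ∈ s, ‖c j‖^2
        - (∑ k ∈ s, ‖c k‖*(2:ℝ)⁻¹^k)^2/256 ≤ ‖∑ k ∈ s, c k • e k‖^2 := by
      refine le_trans (le_of_eq ?_) hsum
      rw [← hdiag, sq]
      rw [show (∑ k ∈ s, ‖c k‖*(2:ℝ)⁻¹^k) * (∑ k ∈ s, ‖c k‖*(2:ℝ)⁻¹^k)/256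
        = ∑ j ∈ s, ∑ k ∈ s, (‖c j‖*(2:ℝ)⁻¹^j) * (‖c k‖*(2:ℝ)⁻¹^k)/256
        from hprodsum.symm]
      rw [← Finset.sum_sub_distrib]
      exact Finset.sum_congr rfl fun j _ => (Finset.sum_sub_distrib _ _).symm
    nlinarith [hfin, hCS, hT0]
  -- the constant
  set spanC : ℝ := Real.sqrt (256/η) with hCdef
  have hC2 : spanC^2 = 256/η := Real.sq_sqrt (by positivity)
  have hC1 : 1 ≤ spanC := by
    have h1 : (1:ℝ) ≤ 256/η := by
      rw [le_div_iff₀ hη0]; linarith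
    calc (1:ℝ) = Real.sqrt 1 := Real.sqrt_one.symm
      _ ≤ spanC := Real.sqrt_le_sqrt h1
  -- bound on the span
  have spanB : ∀ F ∈ Submodule.span ℂ (Set.range e), ∀ y : ℝ, 1 ≤ y →
      ∀ v : ℂ, (v = (y:ℂ)*Complex.I ∨ v = -((y:ℂ)*Complex.I)) →
      ‖ev F v‖ ≤ spanC * ‖F‖ * m ((y:ℂ)*Complex.I) := by
    intro F hF y hy v hv
    rw [Finsupp.mem_span_range_iff_exists_finsupp] at hF
    obtain ⟨c, hc⟩ := hF
    have hc' : F = ∑ k ∈ c.support, c k • e k := by rw [← hc]; rfl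
    have hev : ev F v = ∑ k ∈ c.support, c k * ev (e k) v := by
      rw [hc', map_sum]
      rw [Finset.sum_apply]
      exact Finset.sum_congr rfl fun k _ => by
        simp only [map_smul, Pi.smul_apply, smul_eq_mul]
    have hm0 : 0 ≤ m ((y:ℂ)*Complex.I) := by
      rw [hmy y hy]; positivity
    have hs2 : ∑ k ∈ c.support, (Real.sqrt (64 * a k / η))^2 ≤ 128/η := by
      have hterm : ∀ k ∈ c.support, (Real.sqrt (64 * a k / η))^2 ≤ (64/η) * (4:ℝ)⁻¹^k := by
        intro k _
        rw [Real.sq_sqrt (div_nonneg (mul_nonneg (by norm_num) (ha_pos k).le) hη0.le)]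
        calc 64 * a k/η = (64/η) * a k := by ring
          _ ≤ (64/η)*(4:ℝ)⁻¹^k := by
              refine mul_le_mul_of_nonneg_left ?_ (div_nonneg (by norm_num) hη0.le)
              exact (ha_le k).trans (pow_le_pow_of_le_one (by norm_num) (by norm_num) (by omega))
      refine le_trans (Finset.sum_le_sum hterm) ?_
      rw [← Finset.mul_sum]
      calc (64/η) * ∑ k ∈ c.support, (4:ℝ)⁻¹^k ≤ (64/η)*2 :=
            mul_le_mul_of_nonneg_left (geo_le_two _) (div_nonneg (by norm_num) hη0.le)
        _ = 128/η := by ring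
    have hcsq : ∑ k ∈ c.support, ‖c k‖^2 ≤ 2*‖F‖^2 := by
      rw [hc']; exact riesz _ _
    have hkeyb : (∑ k ∈ c.support, ‖c k‖ * Real.sqrt (64 * a k / η))
        ≤ spanC * ‖F‖ := by
      refine le_of_sq_le_sq'' (by positivity) ?_
        (Finset.sum_nonneg fun k _ => mul_nonneg (norm_nonneg _) (Real.sqrt_nonneg _))
      calc (∑ k ∈ c.support, ‖c k‖ * Real.sqrt (64 * a k / η))^2
          ≤ (∑ k ∈ c.support, ‖c k‖^2)
            * (∑ k ∈ c.support, (Real.sqrt (64 * a k / η))^2) :=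
            Finset.sum_mul_sq_le_sq_mul_sq c.support _ _
        _ ≤ (2*‖F‖^2) * (128/η) := by
            refine mul_le_mul hcsq hs2 (Finset.sum_nonneg fun k _ => sq_nonneg _) ?_
            positivity
        _ = (256/η)*‖F‖^2 := by ring
        _ = (spanC*‖F‖)^2 := by rw [mul_pow, hC2]
    calc ‖ev F v‖ = ‖∑ k ∈ c.support, c k * ev (e k) v‖ := by rw [hev]
      _ ≤ ∑ k ∈ c.support, ‖c k * ev (e k) v‖ := norm_sum_le _ _
      _ = ∑ k ∈ c.support, ‖c k‖ * ‖ev (e k) v‖ := by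
          exact Finset.sum_congr rfl fun k _ => norm_mul _ _
      _ ≤ ∑ k ∈ c.support, ‖c k‖ * (Real.sqrt (64 * a k / η) * m ((y:ℂ)*Complex.I)) :=
          Finset.sum_le_sum fun k _ =>
            mul_le_mul_of_nonneg_left (ptB k y hy v hv) (norm_nonneg _)
      _ = (∑ k ∈ c.support, ‖c k‖ * Real.sqrt (64 * a k / η)) * m ((y:ℂ)*Complex.I) := by
          rw [Finset.sum_mul]
          exact Finset.sum_congr rfl fun k _ => by ring
      _ ≤ spanC * ‖F‖ * m ((y:ℂ)*Complex.I) := mul_le_mul_of_nonneg_right hkeyb hm0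
  -- the closed set of functions satisfying the bound
  set SS : Set H := {F | ∀ y : ℝ, 1 ≤ y → ∀ v : ℂ,
      (v = (y:ℂ)*Complex.I ∨ v = -((y:ℂ)*Complex.I)) →
      ‖⟪K v, F⟫_ℂ‖ ≤ spanC * ‖F‖ * m ((y:ℂ)*Complex.I)} with hSSdef
  have hSSclosed : IsClosed SS := by
    have hEq : SS = ⋂ (y : ℝ) (_ : 1 ≤ y) (v : ℂ)
        (_ : v = (y:ℂ)*Complex.I ∨ v = -((y:ℂ)*Complex.I)),
        {F : H | ‖⟪K v, F⟫_ℂ‖ ≤ spanC * ‖F‖ * m ((y:ℂ)*Complex.I)} := by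
      ext F
      simp only [hSSdef, Set.mem_iInter, Set.mem_setOf_eq]
    rw [hEq]
    refine isClosed_iInter fun y => isClosed_iInter fun hy =>
      isClosed_iInter fun v => isClosed_iInter fun hv => ?_
    have hcont1 : Continuous fun F : H => ‖⟪K v, F⟫_ℂ‖ := by
      have h1 : (fun F : H => ‖⟪K v, F⟫_ℂ‖) = fun F : H => ‖(⟪K v, F⟫_ℂ)‖ := by
        funext F; rfl
      rw [h1]
      exact (Continuous.inner continuous_const continuous_id).norm
    have hcont2 : Continuous fun F : H => spanC * ‖F‖ * m ((y:ℂ)*Complex.I) :=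
      (continuous_const.mul continuous_norm).mul continuous_const
    exact isClosed_le hcont1 hcont2
  have hsub : (Submodule.span ℂ (Set.range e) : Set H) ⊆ SS := by
    intro F hF y hy v hv
    rw [hrepro]
    exact spanB F hF y hy v hv
  set M := (Submodule.span ℂ (Set.range e)).topologicalClosure with hMdef
  have hMsub : (M : Set H) ⊆ SS := by
    rw [hMdef, Submodule.topologicalClosure_coe]
    exact closure_minimal hsub hSSclosed
  have hRm : ∀ F : H, F ∈ (M : Set H) → ∀ zz ∈ D,
      ‖ev F zz‖ ≤ spanC*‖F‖ * m zz ∧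
      ‖(starRingEnd ℂ) (ev F ((starRingEnd ℂ) zz))‖ ≤ spanC*‖F‖ * m zz := by
    intro F hF zz hz
    rw [hD] at hz
    obtain ⟨y, hy, rfl⟩ := hz
    have h := hMsub hF
    constructor
    · rw [← hrepro]
      exact h y hy _ (Or.inl rfl)
    · rw [Complex.norm_conj,
        show (starRingEnd ℂ) ((y:ℂ)*Complex.I) = -((y:ℂ)*Complex.I) by simp, ← hrepro]
      exact h y hy _ (Or.inr rfl)
  refine ⟨M, ?_, ?_, ?_, ⟨spanC, by linarith, ?_⟩⟩
  · -- infinite dimensional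
    have hli : LinearIndependent ℂ e := by
      rw [linearIndependent_iff']
      intro s g hg i hi
      have h := riesz s g
      rw [hg, norm_zero] at h
      have h0 : ∑ k ∈ s, ‖g k‖^2 ≤ 0 := by simpa using h
      have hz2 := (Finset.sum_eq_zero_iff_of_nonneg (fun k _ => sq_nonneg _)).1
        (le_antisymm h0 (Finset.sum_nonneg fun k _ => sq_nonneg _)) i hi
      have h3 := pow_eq_zero_iff (n := 2) (by norm_num) |>.1 hz2
      exact norm_eq_zero.1 h3
    intro hfd
    have hmem : ∀ k, e k ∈ M := fun k =>
      Submodule.le_topologicalClosure _ (Submodule.subset_span (Set.mem_range_self k))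
    have hli2 : LinearIndependent ℂ (fun k => (⟨e k, hmem k⟩ : M)) := by
      apply LinearIndependent.of_comp M.subtype
      exact hli
    have h0 := hli2.finrank_eq_zero_of_infinite
    have h1 : 0 < Module.finrank ℂ M := by
      rw [Module.finrank_pos_iff_exists_ne_zero]
      refine ⟨⟨e 0, hmem 0⟩, ?_⟩
      intro hcon
      have h2 : e 0 = 0 := congrArg Subtype.val hcon
      have h3 := he_norm 0
      rw [h2, norm_zero] at h3
      norm_num at h3
    omega
  · exact Submodule.isClosed_topologicalClosure _
  · intro F hF
    exact ⟨spanC*‖F‖, mul_nonneg (by linarith) (norm_nonneg F), fun zz hz => hRm F hF zz hz⟩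
  · intro F hF
    unfold mnorm
    refine max_le (le_mul_of_one_le_left (norm_nonneg F) hC1) ?_
    refine csInf_le ⟨0, fun x hx => hx.1⟩ ?_
    exact ⟨mul_nonneg (by linarith) (norm_nonneg F), fun zz hz => hRm F hF zz hz⟩
end
end
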